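/- arXiv:1608.03928 — 3 statements merged into one kernel-verified Lean document; each statement's English description precedes it below -/
import Mathlib

section
/- Suppose the block updates of one iteration of the hybrid proximal block coordinate update method are performed, i.e., for each i, x_i^{k+1} minimizes over x_i the function ⟨∇_i f(x̂^{k,i}) − A_iᵀ(λ^k − β(Ax̂^{k,i} − b)), x_i⟩ + g_i(x_i) + (1/2)‖x_i − x_i^k‖_{P_i}², where x̂_j^{k,i} := x_j^{k+1} − w_{ij}(x_j^{k+1} − x_j^k) for all j, and λ^{k+1} := λ^k − ρ(Ax^{k+1} − b). Then for any x ∈ ℝ^n with Ax = b: Σ_{i,j} w_{ij}⟨H_i(x_i^{k+1} − x_i), H_j(x_j^{k+1} − x_j^k)⟩ + β Σ_{i,j} w_{ij}⟨A_i(x_i^{k+1} − x_i), A_j(x_j^{k+1} − x_j^k)⟩ ≥ (1/2)‖H(x^{k+1} − x)‖² + F(x^{k+1}) − F(x) − ⟨λ^{k+1}, Ax^{k+1} − b⟩ + (β − ρ)‖Ax^{k+1} − b‖² + (1/2)(‖x^{k+1} − x‖_P² − ‖x^k − x‖_P² + ‖x^{k+1} − x^k‖_P²). -/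
open Matrix Finset Filter Topology

/-- For a block matrix `M = (M_1,…,M_m)` and a block vector `x = (x_1,…,x_m)`,
`blkMulVec M x = Σ_i M_i x_i` (i.e. `Mx` for the concatenated matrix/vector). -/
noncomputable def blkMulVec {m r : ℕ} {n : Fin m → ℕ}
    (M : ∀ i : Fin m, Matrix (Fin r) (Fin (n i)) ℝ)
    (x : ∀ i : Fin m, Fin (n i) → ℝ) : Fin r → ℝ :=
  ∑ i, M i *ᵥ x i

/-- The objective `F(x) = (1/2) xᵀQx + Σ_i g_i(x_i)` where `Q = HᵀH`,
so `F(x) = (1/2)‖Hx‖² + Σ_i g_i(x_i)`. -/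
noncomputable def Fobj {m q : ℕ} {n : Fin m → ℕ}
    (H : ∀ i : Fin m, Matrix (Fin q) (Fin (n i)) ℝ)
    (g : ∀ i : Fin m, (Fin (n i) → ℝ) → ℝ)
    (x : ∀ i : Fin m, Fin (n i) → ℝ) : ℝ :=
  (1 / 2) * (blkMulVec H x ⬝ᵥ blkMulVec H x) + ∑ i, g i (x i)

/-- `‖x‖_P²` for the block-diagonal matrix `P = blkdiag(P_1,…,P_m)`:
`‖x‖_P² = Σ_i x_iᵀ P_i x_i`. -/
noncomputable def normPSq {m : ℕ} {n : Fin m → ℕ}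
    (P : ∀ i : Fin m, Matrix (Fin (n i)) (Fin (n i)) ℝ)
    (x : ∀ i : Fin m, Fin (n i) → ℝ) : ℝ :=
  ∑ i, x i ⬝ᵥ (P i *ᵥ x i)

/-- `‖y‖_V²` for a block vector `y = (y_1,…,y_m)`, where `V = U ⊗ I` with
`U := W − euᵀ` (so `U_{ij} = W_{ij} − u_j`): `‖y‖_V² = Σ_{i,j} U_{ij} ⟨y_i, y_j⟩`. -/
noncomputable def normVSq {m r : ℕ} (W : Matrix (Fin m) (Fin m) ℝ) (u : Fin m → ℝ)
    (y : Fin m → Fin r → ℝ) : ℝ :=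
  ∑ i, ∑ j, (W i j - u j) * (y i ⬝ᵥ y j)

/-- The quadratic form `v ↦ vᵀ D_Bᵀ (M ⊗ I) D_B v = Σ_{i,j} M_{ij} ⟨B_i v_i, B_j v_j⟩`
for a block-diagonal matrix `D_B = blkdiag(B_1,…,B_m)` and `M ∈ ℝ^{m×m}`. -/
noncomputable def quadKron {m r : ℕ} {n : Fin m → ℕ} (M : Matrix (Fin m) (Fin m) ℝ)
    (B : ∀ i : Fin m, Matrix (Fin r) (Fin (n i)) ℝ)
    (v : ∀ i : Fin m, Fin (n i) → ℝ) : ℝ :=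
  ∑ i, ∑ j, M i j * ((B i *ᵥ v i) ⬝ᵥ (B j *ᵥ v j))

/-- The point `x̂^{k,i}` with blocks `x̂_j^{k,i} = x_j^{k+1} − w_{ij}(x_j^{k+1} − x_j^k)`. -/
noncomputable def xhat {m : ℕ} {n : Fin m → ℕ} (W : Matrix (Fin m) (Fin m) ℝ)
    (xk xk1 : ∀ i : Fin m, Fin (n i) → ℝ) (i : Fin m) :
    ∀ j : Fin m, Fin (n j) → ℝ :=
  fun j => xk1 j - W i j • (xk1 j - xk j)

/-- One iteration of the hybrid Jacobian/Gauss-Seidel proximal BCU method: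
for each `i`, `x_i^{k+1}` minimizes
`⟨∇_i f(x̂^{k,i}) − A_iᵀ(λ^k − β(Ax̂^{k,i} − b)), x_i⟩ + g_i(x_i) + (1/2)‖x_i − x_i^k‖_{P_i}²`
(where `f(x) = (1/2)‖Hx‖²`, so `∇_i f(x̂) = H_iᵀ(Hx̂)`), and
`λ^{k+1} = λ^k − ρ(Ax^{k+1} − b)`. -/
noncomputable def Iter {m q p : ℕ} {n : Fin m → ℕ}
    (H : ∀ i : Fin m, Matrix (Fin q) (Fin (n i)) ℝ)
    (A : ∀ i : Fin m, Matrix (Fin p) (Fin (n i)) ℝ)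
    (b : Fin p → ℝ)
    (g : ∀ i : Fin m, (Fin (n i) → ℝ) → ℝ)
    (P : ∀ i : Fin m, Matrix (Fin (n i)) (Fin (n i)) ℝ)
    (W : Matrix (Fin m) (Fin m) ℝ)
    (β ρ : ℝ)
    (xk xk1 : ∀ i : Fin m, Fin (n i) → ℝ)
    (lamk lamk1 : Fin p → ℝ) : Prop :=
  (∀ i : Fin m, ∀ ξ : Fin (n i) → ℝ,
      ((H i)ᵀ *ᵥ blkMulVec H (xhat W xk xk1 i)
          - (A i)ᵀ *ᵥ (lamk - β • (blkMulVec A (xhat W xk xk1 i) - b))) ⬝ᵥ xk1 i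
        + g i (xk1 i)
        + (1 / 2) * ((xk1 i - xk i) ⬝ᵥ (P i *ᵥ (xk1 i - xk i)))
      ≤ ((H i)ᵀ *ᵥ blkMulVec H (xhat W xk xk1 i)
          - (A i)ᵀ *ᵥ (lamk - β • (blkMulVec A (xhat W xk xk1 i) - b))) ⬝ᵥ ξ
        + g i ξ
        + (1 / 2) * ((ξ - xk i) ⬝ᵥ (P i *ᵥ (ξ - xk i))))
  ∧ lamk1 = lamk - ρ • (blkMulVec A xk1 - b)

lemma dot_sym {N : ℕ} (P : Matrix (Fin N) (Fin N) ℝ) (hP : P.IsHermitian)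
    (u v : Fin N → ℝ) : u ⬝ᵥ (P *ᵥ v) = v ⬝ᵥ (P *ᵥ u) := by
  have hsym : ∀ i j, P j i = P i j := fun i j => by
    conv_rhs => rw [← hP.eq]
    simp [conjTranspose_apply]
  simp only [dotProduct, mulVec, Finset.mul_sum]
  rw [Finset.sum_comm]
  exact Finset.sum_congr rfl fun j _ => Finset.sum_congr rfl fun i _ => by rw [hsym i j]; ring

lemma quad_id {N : ℕ} (P : Matrix (Fin N) (Fin N) ℝ) (hP : P.IsHermitian)
    (u v : Fin N → ℝ) (t : ℝ) :
    (u + t • (v - u)) ⬝ᵥ (P *ᵥ (u + t • (v - u)))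
      = (1 - t) * (u ⬝ᵥ (P *ᵥ u)) + t * (v ⬝ᵥ (P *ᵥ v))
        - t * (1 - t) * ((v - u) ⬝ᵥ (P *ᵥ (v - u))) := by
  have h1 : v ⬝ᵥ (P *ᵥ u) = u ⬝ᵥ (P *ᵥ v) := dot_sym P hP v u
  simp only [mulVec_add, mulVec_sub, mulVec_smul, dotProduct_add, add_dotProduct,
    sub_dotProduct, dotProduct_sub, smul_dotProduct, dotProduct_smul, smul_eq_mul, h1]
  ring

lemma prox_vi {N : ℕ} (d : Fin N → ℝ) (g : (Fin N → ℝ) → ℝ) (hg : ConvexOn ℝ Set.univ g)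
    (P : Matrix (Fin N) (Fin N) ℝ) (hP : P.PosSemidef) (xk a : Fin N → ℝ)
    (hmin : ∀ ξ : Fin N → ℝ,
      d ⬝ᵥ a + g a + (1 / 2) * ((a - xk) ⬝ᵥ (P *ᵥ (a - xk)))
        ≤ d ⬝ᵥ ξ + g ξ + (1 / 2) * ((ξ - xk) ⬝ᵥ (P *ᵥ (ξ - xk))))
    (ξ : Fin N → ℝ) :
    d ⬝ᵥ a + g a + (1 / 2) * ((a - xk) ⬝ᵥ (P *ᵥ (a - xk)))
        + (1 / 2) * ((ξ - a) ⬝ᵥ (P *ᵥ (ξ - a)))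
      ≤ d ⬝ᵥ ξ + g ξ + (1 / 2) * ((ξ - xk) ⬝ᵥ (P *ᵥ (ξ - xk))) := by
  set c : ℝ := (ξ - a) ⬝ᵥ (P *ᵥ (ξ - a)) with hc_def
  have hc : 0 ≤ c := by have := hP.dotProduct_mulVec_nonneg (ξ - a); simpa [hc_def] using this
  set L : ℝ := d ⬝ᵥ a + g a + (1 / 2) * ((a - xk) ⬝ᵥ (P *ᵥ (a - xk))) with hL
  set R : ℝ := d ⬝ᵥ ξ + g ξ + (1 / 2) * ((ξ - xk) ⬝ᵥ (P *ᵥ (ξ - xk))) with hR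
  have key : ∀ t : ℝ, 0 < t → t < 1 → L + ((1 - t) / 2) * c ≤ R := by
    intro t ht ht1
    set z : Fin N → ℝ := a + t • (ξ - a) with hz_def
    have hz : z = (1 - t) • a + t • ξ := by
      funext j
      simp only [hz_def, Pi.add_apply, Pi.smul_apply, Pi.sub_apply, smul_eq_mul]
      ring
    have hgz : g z ≤ (1 - t) * g a + t * g ξ := by
      rw [hz]
      have := hg.2 (Set.mem_univ a) (Set.mem_univ ξ)
        (show (0:ℝ) ≤ 1 - t by linarith) (le_of_lt ht) (by ring)
      simpa [smul_eq_mul] using this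
    have hdz : d ⬝ᵥ z = (1 - t) * (d ⬝ᵥ a) + t * (d ⬝ᵥ ξ) := by
      simp only [hz_def, dotProduct_add, dotProduct_smul, dotProduct_sub, smul_eq_mul]
      ring
    have hsub : z - xk = (a - xk) + t • ((ξ - xk) - (a - xk)) := by
      funext j
      simp only [hz_def, Pi.add_apply, Pi.smul_apply, Pi.sub_apply, smul_eq_mul]
      ring
    have hsub2 : (ξ - xk) - (a - xk) = ξ - a := by
      funext j; simp only [Pi.sub_apply]; ring
    have hQz : (z - xk) ⬝ᵥ (P *ᵥ (z - xk))
        = (1 - t) * ((a - xk) ⬝ᵥ (P *ᵥ (a - xk))) + t * ((ξ - xk) ⬝ᵥ (P *ᵥ (ξ - xk)))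
          - t * (1 - t) * c := by
      rw [hsub, quad_id P hP.1, hsub2, hc_def]
    have hmz := hmin z
    rw [hdz, hQz] at hmz
    have hmz2 : t * L + t * ((1 - t) / 2) * c ≤ t * R := by
      rw [hL, hR]; nlinarith [hgz, hmz]
    have := le_of_mul_le_mul_left (by linarith : t * (L + ((1 - t) / 2) * c) ≤ t * R) ht
    linarith
  have goal2 : L + (1 / 2) * c ≤ R := by
    apply le_of_forall_pos_le_add
    intro ε hε
    set t : ℝ := min (ε / (c + 1)) (1 / 2) with ht_def
    have ht : 0 < t := lt_min (div_pos hε (by linarith)) (by norm_num)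
    have ht1 : t < 1 := lt_of_le_of_lt (min_le_right _ _) (by norm_num)
    have h1 : t ≤ ε / (c + 1) := min_le_left _ _
    have h2 : t * c ≤ (ε / (c + 1)) * c := mul_le_mul_of_nonneg_right h1 hc
    have h3 : (ε / (c + 1)) * c ≤ ε := by
      rw [div_mul_eq_mul_div, div_le_iff₀ (by linarith : (0:ℝ) < c + 1)]
      nlinarith
    have := key t ht ht1
    linarith
  linarith

lemma dot_sum_right {ι : Type*} {r : ℕ} (s : Finset ι) (c : Fin r → ℝ) (u : ι → Fin r → ℝ) :
    c ⬝ᵥ (∑ i ∈ s, u i) = ∑ i ∈ s, c ⬝ᵥ u i := by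
  simp only [dotProduct, Finset.sum_apply, Finset.mul_sum]
  rw [Finset.sum_comm]
lemma dot_sum_left {ι : Type*} {r : ℕ} (s : Finset ι) (u : ι → Fin r → ℝ) (c : Fin r → ℝ) :
    (∑ i ∈ s, u i) ⬝ᵥ c = ∑ i ∈ s, u i ⬝ᵥ c := by
  simp only [dotProduct, Finset.sum_apply, Finset.sum_mul]
  rw [Finset.sum_comm]
lemma transp_dot {a b : ℕ} (M : Matrix (Fin a) (Fin b) ℝ) (u : Fin a → ℝ) (v : Fin b → ℝ) :
    (Mᵀ *ᵥ u) ⬝ᵥ v = u ⬝ᵥ (M *ᵥ v) := by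
  simp only [dotProduct, mulVec, transpose_apply, Finset.sum_mul, Finset.mul_sum]
  rw [Finset.sum_comm]
  exact Finset.sum_congr rfl fun i _ => Finset.sum_congr rfl fun j _ => by ring

lemma dot_sub_flip {N : ℕ} (P : Matrix (Fin N) (Fin N) ℝ) (u v : Fin N → ℝ) :
    (u - v) ⬝ᵥ (P *ᵥ (u - v)) = (v - u) ⬝ᵥ (P *ᵥ (v - u)) := by
  simp only [Matrix.mulVec_sub, dotProduct_sub, sub_dotProduct]
  ring

/-- Inequality (17): if the block updates of one iteration are performed, then
for any `x` with `Ax = b`,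
`Σ_{i,j} w_{ij}⟨H_i(x_i^{k+1} − x_i), H_j(x_j^{k+1} − x_j^k)⟩
 + β Σ_{i,j} w_{ij}⟨A_i(x_i^{k+1} − x_i), A_j(x_j^{k+1} − x_j^k)⟩
 ≥ (1/2)‖H(x^{k+1} − x)‖² + F(x^{k+1}) − F(x) − ⟨λ^{k+1}, Ax^{k+1} − b⟩
   + (β − ρ)‖Ax^{k+1} − b‖²
   + (1/2)(‖x^{k+1} − x‖_P² − ‖x^k − x‖_P² + ‖x^{k+1} − x^k‖_P²)`. -/
theorem stmt_7 {m q p : ℕ} {n : Fin m → ℕ}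
    (H : ∀ i : Fin m, Matrix (Fin q) (Fin (n i)) ℝ)
    (A : ∀ i : Fin m, Matrix (Fin p) (Fin (n i)) ℝ)
    (b : Fin p → ℝ)
    (g : ∀ i : Fin m, (Fin (n i) → ℝ) → ℝ)
    (hg : ∀ i : Fin m, ConvexOn ℝ Set.univ (g i))
    (P : ∀ i : Fin m, Matrix (Fin (n i)) (Fin (n i)) ℝ)
    (hP : ∀ i : Fin m, (P i).PosSemidef)
    (W : Matrix (Fin m) (Fin m) ℝ)
    (β ρ : ℝ) (hβ : 0 < β) (hρ : 0 < ρ)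
    (xk xk1 : ∀ i : Fin m, Fin (n i) → ℝ) (lamk lamk1 : Fin p → ℝ)
    (hiter : Iter H A b g P W β ρ xk xk1 lamk lamk1)
    (x : ∀ i : Fin m, Fin (n i) → ℝ) (hfeas : blkMulVec A x = b) :
    ∑ i, ∑ j, W i j * ((H i *ᵥ (xk1 i - x i)) ⬝ᵥ (H j *ᵥ (xk1 j - xk j)))
      + β * ∑ i, ∑ j, W i j * ((A i *ᵥ (xk1 i - x i)) ⬝ᵥ (A j *ᵥ (xk1 j - xk j)))
    ≥ (1 / 2) * ((blkMulVec H (xk1 - x)) ⬝ᵥ (blkMulVec H (xk1 - x)))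
      + Fobj H g xk1 - Fobj H g x - lamk1 ⬝ᵥ (blkMulVec A xk1 - b)
      + (β - ρ) * ((blkMulVec A xk1 - b) ⬝ᵥ (blkMulVec A xk1 - b))
      + (1 / 2) * (normPSq P (xk1 - x) - normPSq P (xk - x)
          + normPSq P (xk1 - xk)) := by
  obtain ⟨hmin, hlam⟩ := hiter
  set D : ∀ i : Fin m, Fin (n i) → ℝ := fun i =>
    (H i)ᵀ *ᵥ blkMulVec H (xhat W xk xk1 i)
      - (A i)ᵀ *ᵥ (lamk - β • (blkMulVec A (xhat W xk xk1 i) - b)) with hD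
  set r : Fin p → ℝ := blkMulVec A xk1 - b with hr
  -- the per-block strengthened variational inequality
  have hVI : ∀ i : Fin m,
      D i ⬝ᵥ xk1 i + g i (xk1 i)
        + (1 / 2) * ((xk1 i - xk i) ⬝ᵥ (P i *ᵥ (xk1 i - xk i)))
        + (1 / 2) * ((x i - xk1 i) ⬝ᵥ (P i *ᵥ (x i - xk1 i)))
      ≤ D i ⬝ᵥ x i + g i (x i)
        + (1 / 2) * ((x i - xk i) ⬝ᵥ (P i *ᵥ (x i - xk i))) :=
    fun i => prox_vi (D i) (g i) (hg i) (P i) (hP i) (xk i) (xk1 i) (hmin i) (x i)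
  have hsum := Finset.sum_le_sum (fun i (_ : i ∈ Finset.univ) => hVI i)
  -- linearity of blkMulVec
  have hlinH : ∑ i, H i *ᵥ (xk1 i - x i) = blkMulVec H xk1 - blkMulVec H x := by
    simp only [mulVec_sub, Finset.sum_sub_distrib, blkMulVec]
  have hlinA : ∑ i, A i *ᵥ (xk1 i - x i) = r := by
    simp only [mulVec_sub, Finset.sum_sub_distrib, hr, ← hfeas, blkMulVec]
  -- blkMulVec at the hat point
  have hhatH : ∀ i, blkMulVec H (xhat W xk xk1 i)
      = blkMulVec H xk1 - ∑ j, W i j • (H j *ᵥ (xk1 j - xk j)) := by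
    intro i
    simp only [blkMulVec, xhat, mulVec_sub, mulVec_smul, Finset.sum_sub_distrib]
  have hhatA : ∀ i, blkMulVec A (xhat W xk xk1 i)
      = blkMulVec A xk1 - ∑ j, W i j • (A j *ᵥ (xk1 j - xk j)) := by
    intro i
    simp only [blkMulVec, xhat, mulVec_sub, mulVec_smul, Finset.sum_sub_distrib]
  -- per-block expansion of D i ⬝ᵥ (xk1 i - x i)
  have hper : ∀ i, D i ⬝ᵥ (xk1 i - x i)
      = blkMulVec H xk1 ⬝ᵥ (H i *ᵥ (xk1 i - x i))
        - ∑ j, W i j * ((H j *ᵥ (xk1 j - xk j)) ⬝ᵥ (H i *ᵥ (xk1 i - x i)))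
        - lamk ⬝ᵥ (A i *ᵥ (xk1 i - x i))
        + β * (blkMulVec A xk1 ⬝ᵥ (A i *ᵥ (xk1 i - x i)))
        - β * (b ⬝ᵥ (A i *ᵥ (xk1 i - x i)))
        - β * ∑ j, W i j * ((A j *ᵥ (xk1 j - xk j)) ⬝ᵥ (A i *ᵥ (xk1 i - x i))) := by
    intro i
    simp only [hD]
    generalize xk1 i - x i = v
    simp only [sub_dotProduct, transp_dot, hhatH i, hhatA i, dotProduct_sub,
      sub_dotProduct, smul_dotProduct, dot_sum_left, smul_eq_mul]
    ring
  -- summed expansion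
  have hdsum : ∑ i, D i ⬝ᵥ (xk1 i - x i)
      = blkMulVec H xk1 ⬝ᵥ (blkMulVec H xk1 - blkMulVec H x)
        - ∑ i, ∑ j, W i j * ((H i *ᵥ (xk1 i - x i)) ⬝ᵥ (H j *ᵥ (xk1 j - xk j)))
        - lamk ⬝ᵥ r + β * (blkMulVec A xk1 ⬝ᵥ r) - β * (b ⬝ᵥ r)
        - β * ∑ i, ∑ j, W i j * ((A i *ᵥ (xk1 i - x i)) ⬝ᵥ (A j *ᵥ (xk1 j - xk j))) := by
    have hflipH : ∀ i, ∑ j, W i j * ((H j *ᵥ (xk1 j - xk j)) ⬝ᵥ (H i *ᵥ (xk1 i - x i)))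
        = ∑ j, W i j * ((H i *ᵥ (xk1 i - x i)) ⬝ᵥ (H j *ᵥ (xk1 j - xk j))) := fun i =>
      Finset.sum_congr rfl fun j _ => by rw [dotProduct_comm]
    have hflipA : ∀ i, ∑ j, W i j * ((A j *ᵥ (xk1 j - xk j)) ⬝ᵥ (A i *ᵥ (xk1 i - x i)))
        = ∑ j, W i j * ((A i *ᵥ (xk1 i - x i)) ⬝ᵥ (A j *ᵥ (xk1 j - xk j))) := fun i =>
      Finset.sum_congr rfl fun j _ => by rw [dotProduct_comm]
    rw [Finset.sum_congr rfl fun i _ => by rw [hper i, hflipH i, hflipA i]]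
    simp only [Finset.sum_add_distrib, Finset.sum_sub_distrib, ← Finset.mul_sum,
      ← dot_sum_right, hlinH, hlinA]
  -- rewrite the summed VI
  have hsum2 : ∑ i, D i ⬝ᵥ (xk1 i - x i)
        + ∑ i, g i (xk1 i) - ∑ i, g i (x i)
        + (1 / 2) * normPSq P (xk1 - xk)
        + (1 / 2) * normPSq P (xk1 - x)
      ≤ (1 / 2) * normPSq P (xk - x) := by
    have e1 : ∑ i, D i ⬝ᵥ (xk1 i - x i) = ∑ i, D i ⬝ᵥ xk1 i - ∑ i, D i ⬝ᵥ x i := by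
      rw [← Finset.sum_sub_distrib]
      exact Finset.sum_congr rfl fun i _ => dotProduct_sub _ _ _
    have e2 : normPSq P (xk1 - xk)
        = ∑ i, (xk1 i - xk i) ⬝ᵥ (P i *ᵥ (xk1 i - xk i)) := by
      simp only [normPSq, Pi.sub_apply]
    have e3 : normPSq P (xk1 - x)
        = ∑ i, (x i - xk1 i) ⬝ᵥ (P i *ᵥ (x i - xk1 i)) := by
      simp only [normPSq, Pi.sub_apply]
      exact Finset.sum_congr rfl fun i _ => dot_sub_flip (P i) (xk1 i) (x i)
    have e4 : normPSq P (xk - x)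
        = ∑ i, (x i - xk i) ⬝ᵥ (P i *ᵥ (x i - xk i)) := by
      simp only [normPSq, Pi.sub_apply]
      exact Finset.sum_congr rfl fun i _ => dot_sub_flip (P i) (xk i) (x i)
    simp only [Finset.sum_add_distrib, ← Finset.mul_sum] at hsum
    rw [e1, e2, e3, e4]
    linarith
  -- final assembly
  have hHD : blkMulVec H (xk1 - x) = blkMulVec H xk1 - blkMulVec H x := by
    rw [← hlinH]
    simp only [blkMulVec, Pi.sub_apply]
  have eHD : blkMulVec H (xk1 - x) ⬝ᵥ blkMulVec H (xk1 - x)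
      = blkMulVec H xk1 ⬝ᵥ blkMulVec H xk1 - 2 * (blkMulVec H xk1 ⬝ᵥ blkMulVec H x)
        + blkMulVec H x ⬝ᵥ blkMulVec H x := by
    rw [hHD]
    simp only [dotProduct_sub, sub_dotProduct]
    rw [dotProduct_comm (blkMulVec H x) (blkMulVec H xk1)]
    ring
  have eHp : blkMulVec H xk1 ⬝ᵥ (blkMulVec H xk1 - blkMulVec H x)
      = blkMulVec H xk1 ⬝ᵥ blkMulVec H xk1 - blkMulVec H xk1 ⬝ᵥ blkMulVec H x :=
    dotProduct_sub _ _ _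
  have er : r ⬝ᵥ r = blkMulVec A xk1 ⬝ᵥ r - b ⬝ᵥ r := by
    conv_lhs => rw [hr]
    exact sub_dotProduct _ _ _
  have er2 : β * (r ⬝ᵥ r) = β * (blkMulVec A xk1 ⬝ᵥ r) - β * (b ⬝ᵥ r) := by
    rw [er]; ring
  have hlam2 : lamk1 ⬝ᵥ r = lamk ⬝ᵥ r - ρ * (r ⬝ᵥ r) := by
    rw [hlam, sub_dotProduct, smul_dotProduct, smul_eq_mul]
  simp only [Fobj, ge_iff_le]
  linarith [hsum2, hdsum, hlam2, eHD, eHp, er2]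
end

section
/- (One-iteration result.) Suppose W satisfies w_{ij} = 1 for all j ≥ i and U := W − euᵀ is symmetric for some u ∈ ℝ^m. Suppose the iteration is performed: for each i, x_i^{k+1} minimizes over x_i the function ⟨∇_i f(x̂^{k,i}) − A_iᵀ(λ^k − β(Ax̂^{k,i} − b)), x_i⟩ + g_i(x_i) + (1/2)‖x_i − x_i^k‖_{P_i}², where x̂_j^{k,i} := x_j^{k+1} − w_{ij}(x_j^{k+1} − x_j^k), and λ^{k+1} := λ^k − ρ(Ax^{k+1} − b). Then for any α > 0 and any (x, λ) with Ax = b: F(x^{k+1}) − F(x) − ⟨λ, Ax^{k+1} − b⟩ + (1/(2ρ))(‖λ^{k+1} − λ‖² − ‖λ^k − λ‖²) + ((α−1)/(2α))‖H(x^{k+1} − x)‖² + ((β−ρ)/2 + β(α−1)/(2α))‖Ax^{k+1} − b‖² + (1/2)(‖x^{k+1} − x‖_P² − ‖x^k − x‖_P² + ‖x^{k+1} − x^k‖_P²) ≤ (1/2)(‖y^{k+1} − y‖_V² − ‖y^k − y‖_V² + ‖y^{k+1} − y^k‖_V²) + (α/2)‖Σ_i u_i(y_i^{k+1} − y_i^k)‖²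 + (β/2)(‖z^{k+1} − z‖_V² − ‖z^k − z‖_V² + ‖z^{k+1} − z^k‖_V²) + (βα/2)‖Σ_i u_i(z_i^{k+1} − z_i^k)‖². -/
open Matrix Finset Filter Topology

private lemma dot_self_nonneg' {r : ℕ} (v : Fin r → ℝ) : 0 ≤ v ⬝ᵥ v :=
  Finset.sum_nonneg fun _ _ => mul_self_nonneg _

private lemma young' {r : ℕ} (α : ℝ) (hα : 0 < α) (s t : Fin r → ℝ) :
    s ⬝ᵥ t ≤ α / 2 * (s ⬝ᵥ s) + 1 / (2 * α) * (t ⬝ᵥ t) := by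
  have h0 : 0 ≤ (α • s - t) ⬝ᵥ (α • s - t) := dot_self_nonneg' _
  have hexp : (α • s - t) ⬝ᵥ (α • s - t)
      = α * α * (s ⬝ᵥ s) - 2 * α * (s ⬝ᵥ t) + t ⬝ᵥ t := by
    simp [sub_dotProduct, dotProduct_sub, smul_dotProduct,
      dotProduct_smul, smul_eq_mul, dotProduct_comm t s]
    ring
  rw [← sub_nonneg]
  have key : α / 2 * (s ⬝ᵥ s) + 1 / (2 * α) * (t ⬝ᵥ t) - s ⬝ᵥ t
      = 1 / (2 * α) * ((α • s - t) ⬝ᵥ (α • s - t)) := by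
    rw [hexp]; field_simp; ring
  rw [key]
  positivity

private lemma psymm {k : ℕ} {P : Matrix (Fin k) (Fin k) ℝ} (hP : P.PosSemidef)
    (s t : Fin k → ℝ) : s ⬝ᵥ (P *ᵥ t) = t ⬝ᵥ (P *ᵥ s) := by
  have hPt : Pᵀ = P := by simpa [Matrix.IsHermitian] using hP.1
  rw [Matrix.dotProduct_mulVec, ← Matrix.mulVec_transpose, hPt, dotProduct_comm]

private lemma three_point_block {k : ℕ} {P : Matrix (Fin k) (Fin k) ℝ}
    (hP : P.PosSemidef) (x x0 x1 : Fin k → ℝ) :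
    (x - x1) ⬝ᵥ (P *ᵥ (x1 - x0))
      = (1 / 2) * ((x0 - x) ⬝ᵥ (P *ᵥ (x0 - x)) - (x1 - x) ⬝ᵥ (P *ᵥ (x1 - x))
          - (x1 - x0) ⬝ᵥ (P *ᵥ (x1 - x0))) := by
  simp only [Matrix.mulVec_sub, dotProduct_sub, sub_dotProduct]
  linarith [psymm hP x x0, psymm hP x x1, psymm hP x0 x1]

private lemma block_vi {k : ℕ} (c x0 x1 xs : Fin k → ℝ) (g : (Fin k → ℝ) → ℝ)
    (hg : ConvexOn ℝ Set.univ g) {P : Matrix (Fin k) (Fin k) ℝ} (hP : P.PosSemidef)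
    (hmin : ∀ ξ : Fin k → ℝ,
      c ⬝ᵥ x1 + g x1 + (1 / 2) * ((x1 - x0) ⬝ᵥ (P *ᵥ (x1 - x0)))
        ≤ c ⬝ᵥ ξ + g ξ + (1 / 2) * ((ξ - x0) ⬝ᵥ (P *ᵥ (ξ - x0)))) :
    c ⬝ᵥ (x1 - xs) + g x1 - g xs ≤ (xs - x1) ⬝ᵥ (P *ᵥ (x1 - x0)) := by
  set Δ : Fin k → ℝ := xs - x1 with hΔ
  set S : ℝ := Δ ⬝ᵥ (P *ᵥ Δ) with hS
  have hS0 : 0 ≤ S := by simpa using hP.dotProduct_mulVec_nonneg Δ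
  set K : ℝ := c ⬝ᵥ (x1 - xs) + g x1 - g xs - (xs - x1) ⬝ᵥ (P *ᵥ (x1 - x0)) with hK
  suffices hK0 : K ≤ 0 by
    rw [hK] at hK0; linarith
  have ht : ∀ t : ℝ, 0 < t → t ≤ 1 → K ≤ (t / 2) * S := by
    intro t ht0 ht1
    have hmin' := hmin (x1 + t • Δ)
    have hgc : g (x1 + t • Δ) ≤ (1 - t) * g x1 + t * g xs := by
      have hx : x1 + t • Δ = (1 - t) • x1 + t • xs := by
        ext j; simp [hΔ, Pi.smul_apply, smul_eq_mul]; ring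
      rw [hx]
      exact hg.2 (Set.mem_univ x1) (Set.mem_univ xs) (by linarith) ht0.le (by ring)
    have hdot : c ⬝ᵥ (x1 + t • Δ) = c ⬝ᵥ x1 + t * (c ⬝ᵥ Δ) := by
      simp [dotProduct_add, dotProduct_smul, smul_eq_mul]
    have hquad : (x1 + t • Δ - x0) ⬝ᵥ (P *ᵥ (x1 + t • Δ - x0))
        = (x1 - x0) ⬝ᵥ (P *ᵥ (x1 - x0)) + 2 * t * (Δ ⬝ᵥ (P *ᵥ (x1 - x0)))
          + t * t * S := by
      have h1 : x1 + t • Δ - x0 = (x1 - x0) + t • Δ := by ext j; simp; ring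
      rw [h1]
      simp only [Matrix.mulVec_add, Matrix.mulVec_smul, dotProduct_add,
        add_dotProduct, dotProduct_smul, smul_dotProduct,
        smul_eq_mul, hS]
      linear_combination t * psymm hP (x1 - x0) Δ
    rw [hdot, hquad] at hmin'
    have hcΔ : c ⬝ᵥ Δ = -(c ⬝ᵥ (x1 - xs)) := by
      simp [hΔ, dotProduct_sub]
    have hΔPd : Δ ⬝ᵥ (P *ᵥ (x1 - x0)) = (xs - x1) ⬝ᵥ (P *ᵥ (x1 - x0)) := by rw [hΔ]
    have hstep : 0 ≤ t * (-K) + (t * t / 2) * S := by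
      rw [hK]
      nlinarith [hmin', hcΔ, hΔPd, hgc]
    have h2 : t * K ≤ t * ((t / 2) * S) := by nlinarith [hstep]
    exact (mul_le_mul_iff_right₀ ht0).mp h2
  by_contra hKpos
  push_neg at hKpos
  set t : ℝ := K / (S + K) with htdef
  have hSK : 0 < S + K := by linarith
  have ht0 : 0 < t := div_pos hKpos hSK
  have ht1 : t ≤ 1 := (div_le_one hSK).mpr (by linarith)
  have hcon := ht t ht0 ht1
  have : (t / 2) * S < K := by
    rw [htdef, div_div, div_mul_eq_mul_div, div_lt_iff₀ (by linarith)]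
    nlinarith [mul_pos hKpos hKpos, mul_nonneg hKpos.le hS0]
  linarith

private lemma sum_dotProduct' {m r : ℕ} (f : Fin m → Fin r → ℝ) (v : Fin r → ℝ) :
    (∑ i, f i) ⬝ᵥ v = ∑ i, f i ⬝ᵥ v := by
  simp [dotProduct, Finset.sum_mul, Finset.sum_apply]
  exact Finset.sum_comm

private lemma dotProduct_sum' {m r : ℕ} (f : Fin m → Fin r → ℝ) (v : Fin r → ℝ) :
    v ⬝ᵥ (∑ i, f i) = ∑ i, v ⬝ᵥ f i := by
  simp [dotProduct, Finset.mul_sum, Finset.sum_apply]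
  exact Finset.sum_comm

private lemma transpose_dot {p k : ℕ} (M : Matrix (Fin p) (Fin k) ℝ)
    (v : Fin p → ℝ) (w : Fin k → ℝ) : (Mᵀ *ᵥ v) ⬝ᵥ w = v ⬝ᵥ (M *ᵥ w) := by
  rw [Matrix.mulVec_transpose, ← Matrix.dotProduct_mulVec]

private lemma lam_expand {p : ℕ} (s r : Fin p → ℝ) (ρ : ℝ) :
    (s - ρ • r) ⬝ᵥ (s - ρ • r)
      = s ⬝ᵥ s - 2 * ρ * (s ⬝ᵥ r) + ρ ^ 2 * (r ⬝ᵥ r) := by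
  simp [sub_dotProduct, dotProduct_sub, smul_dotProduct,
    dotProduct_smul, smul_eq_mul, dotProduct_comm r s]
  ring

private lemma final_combine {SC G1 G0 PP T Sy Sz F1 F0 Lam Lk D L0 L1 R HaSq
      Pk Pk1 Pd Vy1 Vy0 Vyd Vz1 Vz0 Vzd Nd Ne Dy Dz : ℝ}
    {α β ρ : ℝ} (hα : 0 < α) (hβ : 0 < β) (hρ : 0 < ρ)
    (hVI : SC + G1 - G0 ≤ PP)
    (hI1 : PP = (1 / 2) * (Pk - Pk1 - Pd))
    (hI2 : SC = T - Sy - Lk + β * R - β * Sz)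
    (hI3 : F1 - F0 = (G1 - G0) + T - (1 / 2) * HaSq)
    (hI4a : L1 = L0 - 2 * ρ * D + ρ ^ 2 * R)
    (hI4b : D = Lk - Lam)
    (hI5y : Sy = (1 / 2) * (Vy1 - Vy0 + Vyd) + Dy)
    (hI5z : Sz = (1 / 2) * (Vz1 - Vz0 + Vzd) + Dz)
    (hY1 : Dy ≤ α / 2 * Nd + 1 / (2 * α) * HaSq)
    (hY2 : Dz ≤ α / 2 * Ne + 1 / (2 * α) * R) :
    F1 - F0 - Lam + 1 / (2 * ρ) * (L1 - L0) + (α - 1) / (2 * α) * HaSq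
      + ((β - ρ) / 2 + β * (α - 1) / (2 * α)) * R + 1 / 2 * (Pk1 - Pk + Pd)
    ≤ 1 / 2 * (Vy1 - Vy0 + Vyd) + α / 2 * Nd + β / 2 * (Vz1 - Vz0 + Vzd)
      + β * α / 2 * Ne := by
  have key : F1 - F0 - Lam + 1 / (2 * ρ) * (L1 - L0) + (α - 1) / (2 * α) * HaSq
      + ((β - ρ) / 2 + β * (α - 1) / (2 * α)) * R + 1 / 2 * (Pk1 - Pk + Pd)
      - (1 / 2 * (Vy1 - Vy0 + Vyd) + α / 2 * Nd + β / 2 * (Vz1 - Vz0 + Vzd)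
        + β * α / 2 * Ne)
      = (SC + G1 - G0 - PP) + (Dy - (α / 2 * Nd + 1 / (2 * α) * HaSq))
        + β * (Dz - (α / 2 * Ne + 1 / (2 * α) * R)) := by
    rw [hI3, hI4a, hI4b, hI1, hI2, hI5y, hI5z]
    field_simp
    ring
  have h3 : β * (Dz - (α / 2 * Ne + 1 / (2 * α) * R)) ≤ 0 :=
    mul_nonpos_of_nonneg_of_nonpos hβ.le (by linarith)
  linarith [key, hVI, hY1, h3]

private lemma vnorm_id {m r : ℕ} (W : Matrix (Fin m) (Fin m) ℝ) (u : Fin m → ℝ)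
    (hU : ∀ i j, W i j - u j = W j i - u i) (a δ : Fin m → Fin r → ℝ) :
    ∑ i, ∑ j, W i j * (δ j ⬝ᵥ a i)
      = (1 / 2) * (normVSq W u a - normVSq W u (a - δ) + normVSq W u δ)
        + (∑ j, u j • δ j) ⬝ᵥ (∑ i, a i) := by
  have e1 : normVSq W u a - normVSq W u (a - δ) + normVSq W u δ
      = (∑ i, ∑ j, (W i j - u j) * (δ j ⬝ᵥ a i))
        + ∑ i, ∑ j, (W i j - u j) * (δ i ⬝ᵥ a j) := by
    simp only [normVSq, ← Finset.sum_sub_distrib, ← Finset.sum_add_distrib]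
    refine Finset.sum_congr rfl fun i _ => Finset.sum_congr rfl fun j _ => ?_
    have h : (a - δ) i ⬝ᵥ (a - δ) j
        = a i ⬝ᵥ a j - a i ⬝ᵥ δ j - δ i ⬝ᵥ a j + δ i ⬝ᵥ δ j := by
      simp [Pi.sub_apply, sub_dotProduct, dotProduct_sub]
      ring
    rw [h, dotProduct_comm (δ j) (a i)]
    ring
  have e2 : ∑ i, ∑ j, (W i j - u j) * (δ i ⬝ᵥ a j)
      = ∑ i, ∑ j, (W i j - u j) * (δ j ⬝ᵥ a i) := by
    rw [Finset.sum_comm]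
    exact Finset.sum_congr rfl fun x _ => Finset.sum_congr rfl fun y _ => by
      rw [hU x y]
  have hdot : (∑ j, u j • δ j) ⬝ᵥ (∑ i, a i) = ∑ i, ∑ j, u j * (δ j ⬝ᵥ a i) := by
    rw [sum_dotProduct']
    simp only [smul_dotProduct, dotProduct_sum', smul_eq_mul,
      Finset.mul_sum]
    rw [Finset.sum_comm]
  have e3 : ∑ i, ∑ j, (W i j - u j) * (δ j ⬝ᵥ a i)
      = (∑ i, ∑ j, W i j * (δ j ⬝ᵥ a i)) - ∑ i, ∑ j, u j * (δ j ⬝ᵥ a i) := by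
    simp [sub_mul, Finset.sum_sub_distrib]
  rw [e1, e2, e3, hdot]
  ring

/-- Proposition 2 (one-iteration result), inequality (16). -/
theorem stmt_8 {m q p : ℕ} {n : Fin m → ℕ}
    (H : ∀ i : Fin m, Matrix (Fin q) (Fin (n i)) ℝ)
    (A : ∀ i : Fin m, Matrix (Fin p) (Fin (n i)) ℝ)
    (b : Fin p → ℝ)
    (g : ∀ i : Fin m, (Fin (n i) → ℝ) → ℝ)
    (hg : ∀ i : Fin m, ConvexOn ℝ Set.univ (g i))
    (P : ∀ i : Fin m, Matrix (Fin (n i)) (Fin (n i)) ℝ)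
    (hP : ∀ i : Fin m, (P i).PosSemidef)
    (W : Matrix (Fin m) (Fin m) ℝ) (u : Fin m → ℝ)
    (hW : ∀ i j : Fin m, i ≤ j → W i j = 1)              -- w_{ij} = 1 for j ≥ i
    (hU : ∀ i j : Fin m, W i j - u j = W j i - u i)       -- U := W − euᵀ symmetric
    (β ρ : ℝ) (hβ : 0 < β) (hρ : 0 < ρ)
    (xk xk1 : ∀ i : Fin m, Fin (n i) → ℝ) (lamk lamk1 : Fin p → ℝ)
    (hiter : Iter H A b g P W β ρ xk xk1 lamk lamk1)
    (α : ℝ) (hα : 0 < α)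
    (x : ∀ i : Fin m, Fin (n i) → ℝ) (lam : Fin p → ℝ)
    (hfeas : blkMulVec A x = b)
    (y yk yk1 : Fin m → Fin q → ℝ) (z zk zk1 : Fin m → Fin p → ℝ)
    (hy : y = fun i => H i *ᵥ x i) (hyk : yk = fun i => H i *ᵥ xk i)
    (hyk1 : yk1 = fun i => H i *ᵥ xk1 i)
    (hz : z = fun i => A i *ᵥ x i) (hzk : zk = fun i => A i *ᵥ xk i)
    (hzk1 : zk1 = fun i => A i *ᵥ xk1 i) :
    Fobj H g xk1 - Fobj H g x - lam ⬝ᵥ (blkMulVec A xk1 - b)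
      + (1 / (2 * ρ)) * ((lamk1 - lam) ⬝ᵥ (lamk1 - lam)
          - (lamk - lam) ⬝ᵥ (lamk - lam))
      + ((α - 1) / (2 * α)) *
          ((blkMulVec H (xk1 - x)) ⬝ᵥ (blkMulVec H (xk1 - x)))
      + ((β - ρ) / 2 + β * (α - 1) / (2 * α)) *
          ((blkMulVec A xk1 - b) ⬝ᵥ (blkMulVec A xk1 - b))
      + (1 / 2) * (normPSq P (xk1 - x) - normPSq P (xk - x)
          + normPSq P (xk1 - xk))
    ≤ (1 / 2) * (normVSq W u (yk1 - y) - normVSq W u (yk - y)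
          + normVSq W u (yk1 - yk))
      + (α / 2) * ((∑ i, u i • (yk1 i - yk i)) ⬝ᵥ (∑ i, u i • (yk1 i - yk i)))
      + (β / 2) * (normVSq W u (zk1 - z) - normVSq W u (zk - z)
          + normVSq W u (zk1 - zk))
      + (β * α / 2) *
          ((∑ i, u i • (zk1 i - zk i)) ⬝ᵥ (∑ i, u i • (zk1 i - zk i))) := by
  
  obtain ⟨hmin, hlam⟩ := hiter
  have hHa : blkMulVec H (xk1 - x) = ∑ i, (yk1 i - y i) := by
    simp [blkMulVec, hyk1, hy, Pi.sub_apply, Matrix.mulVec_sub,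
      Finset.sum_sub_distrib]
  have hr : blkMulVec A xk1 - b = ∑ i, (zk1 i - z i) := by
    rw [← hfeas]
    simp [blkMulVec, hzk1, hz, Finset.sum_sub_distrib]
  have hay : ∀ i, H i *ᵥ (xk1 i - x i) = yk1 i - y i := fun i => by
    simp [hyk1, hy, Matrix.mulVec_sub]
  have haz : ∀ i, A i *ᵥ (xk1 i - x i) = zk1 i - z i := fun i => by
    simp [hzk1, hz, Matrix.mulVec_sub]
  have hYhat : ∀ i, blkMulVec H (xhat W xk xk1 i)
      = blkMulVec H xk1 - ∑ j, W i j • (yk1 j - yk j) := by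
    intro i
    simp [blkMulVec, xhat, hyk1, hyk, Matrix.mulVec_sub, Matrix.mulVec_smul,
      Finset.sum_sub_distrib]
  have hZhat : ∀ i, blkMulVec A (xhat W xk xk1 i)
      = blkMulVec A xk1 - ∑ j, W i j • (zk1 j - zk j) := by
    intro i
    simp [blkMulVec, xhat, hzk1, hzk, Matrix.mulVec_sub, Matrix.mulVec_smul,
      Finset.sum_sub_distrib]
  have hterm : ∀ i : Fin m,
      ((H i)ᵀ *ᵥ blkMulVec H (xhat W xk xk1 i)
        - (A i)ᵀ *ᵥ (lamk - β • (blkMulVec A (xhat W xk xk1 i) - b)))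
          ⬝ᵥ (xk1 i - x i)
      = blkMulVec H xk1 ⬝ᵥ (yk1 i - y i)
        - (∑ j, W i j * ((yk1 j - yk j) ⬝ᵥ (yk1 i - y i)))
        - lamk ⬝ᵥ (zk1 i - z i)
        + β * ((blkMulVec A xk1 - b) ⬝ᵥ (zk1 i - z i))
        - β * ∑ j, W i j * ((zk1 j - zk j) ⬝ᵥ (zk1 i - z i)) := by
    intro i
    rw [sub_dotProduct, transpose_dot, transpose_dot, hay i, haz i,
      hYhat i, hZhat i]
    have h1 : (blkMulVec H xk1 - ∑ j, W i j • (yk1 j - yk j)) ⬝ᵥ (yk1 i - y i)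
        = blkMulVec H xk1 ⬝ᵥ (yk1 i - y i)
          - ∑ j, W i j * ((yk1 j - yk j) ⬝ᵥ (yk1 i - y i)) := by
      rw [sub_dotProduct, sum_dotProduct']
      simp only [smul_dotProduct, smul_eq_mul]
    have h2 : blkMulVec A xk1 - (∑ j, W i j • (zk1 j - zk j)) - b
        = (blkMulVec A xk1 - b) - ∑ j, W i j • (zk1 j - zk j) := by
      ext t; simp; ring
    rw [h1, h2]
    have h3 : (lamk - β • ((blkMulVec A xk1 - b) - ∑ j, W i j • (zk1 j - zk j)))
          ⬝ᵥ (zk1 i - z i)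
        = lamk ⬝ᵥ (zk1 i - z i)
          - β * ((blkMulVec A xk1 - b) ⬝ᵥ (zk1 i - z i))
          + β * ∑ j, W i j * ((zk1 j - zk j) ⬝ᵥ (zk1 i - z i)) := by
      rw [sub_dotProduct, smul_dotProduct, sub_dotProduct,
        sum_dotProduct']
      simp only [smul_dotProduct, smul_eq_mul]
      rw [mul_sub, Finset.mul_sum]
      ring
    rw [h3]
    ring
  have hSC : ∑ i, (((H i)ᵀ *ᵥ blkMulVec H (xhat W xk xk1 i)
        - (A i)ᵀ *ᵥ (lamk - β • (blkMulVec A (xhat W xk xk1 i) - b)))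
          ⬝ᵥ (xk1 i - x i))
      = blkMulVec H xk1 ⬝ᵥ blkMulVec H (xk1 - x)
        - (∑ i, ∑ j, W i j * ((yk1 j - yk j) ⬝ᵥ (yk1 i - y i)))
        - lamk ⬝ᵥ (blkMulVec A xk1 - b)
        + β * ((blkMulVec A xk1 - b) ⬝ᵥ (blkMulVec A xk1 - b))
        - β * ∑ i, ∑ j, W i j * ((zk1 j - zk j) ⬝ᵥ (zk1 i - z i)) := by
    rw [Finset.sum_congr rfl fun i _ => hterm i]
    rw [hHa, hr]
    simp only [Finset.sum_sub_distrib, Finset.sum_add_distrib, ← Finset.mul_sum,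
      ← dotProduct_sum']
  have hVI : (∑ i, (((H i)ᵀ *ᵥ blkMulVec H (xhat W xk xk1 i)
        - (A i)ᵀ *ᵥ (lamk - β • (blkMulVec A (xhat W xk xk1 i) - b)))
          ⬝ᵥ (xk1 i - x i)))
        + (∑ i, g i (xk1 i)) - ∑ i, g i (x i)
      ≤ ∑ i, (x i - xk1 i) ⬝ᵥ (P i *ᵥ (xk1 i - xk i)) := by
    have h := Finset.sum_le_sum (s := Finset.univ)
      (fun i _ => block_vi _ (xk i) (xk1 i) (x i) (g i) (hg i) (hP i) (hmin i))
    simpa only [Finset.sum_sub_distrib, Finset.sum_add_distrib] using h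
  have hI1 : ∑ i, (x i - xk1 i) ⬝ᵥ (P i *ᵥ (xk1 i - xk i))
      = (1 / 2) * (normPSq P (xk - x) - normPSq P (xk1 - x)
          - normPSq P (xk1 - xk)) := by
    simp only [normPSq, Pi.sub_apply, ← Finset.sum_sub_distrib, Finset.mul_sum]
    exact Finset.sum_congr rfl fun i _ => three_point_block (hP i) (x i) (xk i) (xk1 i)
  have hI3 : Fobj H g xk1 - Fobj H g x
      = ((∑ i, g i (xk1 i)) - ∑ i, g i (x i))
        + blkMulVec H xk1 ⬝ᵥ blkMulVec H (xk1 - x)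
        - (1 / 2) * (blkMulVec H (xk1 - x) ⬝ᵥ blkMulVec H (xk1 - x)) := by
    have hsub : blkMulVec H (xk1 - x) = blkMulVec H xk1 - blkMulVec H x := by
      simp [blkMulVec, Matrix.mulVec_sub, Finset.sum_sub_distrib]
    rw [Fobj, Fobj, hsub]
    simp only [dotProduct_sub, sub_dotProduct]
    rw [dotProduct_comm (blkMulVec H x) (blkMulVec H xk1)]
    ring
  have hv : lamk1 - lam = (lamk - lam) - ρ • (blkMulVec A xk1 - b) := by
    rw [hlam]; ext t; simp; ring
  have hI4a : (lamk1 - lam) ⬝ᵥ (lamk1 - lam)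
      = (lamk - lam) ⬝ᵥ (lamk - lam)
        - 2 * ρ * ((lamk - lam) ⬝ᵥ (blkMulVec A xk1 - b))
        + ρ ^ 2 * ((blkMulVec A xk1 - b) ⬝ᵥ (blkMulVec A xk1 - b)) := by
    rw [hv]; exact lam_expand _ _ _
  have hI4b : (lamk - lam) ⬝ᵥ (blkMulVec A xk1 - b)
      = lamk ⬝ᵥ (blkMulVec A xk1 - b) - lam ⬝ᵥ (blkMulVec A xk1 - b) :=
    sub_dotProduct _ _ _
  have hyd : (yk1 - y) - (yk1 - yk) = yk - y := by ext i j; simp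
  have hzd : (zk1 - z) - (zk1 - zk) = zk - z := by ext i j; simp
  have hI5y := vnorm_id W u hU (yk1 - y) (yk1 - yk)
  rw [hyd] at hI5y
  simp only [Pi.sub_apply] at hI5y
  rw [← hHa] at hI5y
  have hI5z := vnorm_id W u hU (zk1 - z) (zk1 - zk)
  rw [hzd] at hI5z
  simp only [Pi.sub_apply] at hI5z
  rw [← hr] at hI5z
  have hY1 := young' α hα (∑ i, u i • (yk1 i - yk i)) (blkMulVec H (xk1 - x))
  have hY2 := young' α hα (∑ i, u i • (zk1 i - zk i)) (blkMulVec A xk1 - b)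
  exact final_combine hα hβ hρ hVI hI1 hSC hI3 hI4a hI4b hI5y hI5z
    (le_trans (le_of_eq rfl) hY1) hY2
end

section
/- (Ergodic gap bound.) In addition to the hypotheses of the telescoped one-iteration bound (w_{ij} = 1 for j ≥ i, U := W − euᵀ symmetric, β ≥ ρ > 0, α ≥ 1, and {(x^k, λ^k)}_{k≥1} generated by the algorithm), assume P̂ := P − D_Hᵀ((W − euᵀ + αuuᵀ) ⊗ I)D_H − β D_Aᵀ((W − euᵀ + αuuᵀ) ⊗ I)D_A is positive semidefinite, and let x* satisfy Ax* = b. Define x̄^{t+1} := (1/t) Σ_{k=1}^t x^{k+1}. Then for every λ ∈ ℝ^p: F(x̄^{t+1}) − F(x*) − ⟨λ, Ax̄^{t+1} − b⟩ ≤ (1/(2t)) ((1/ρ)‖λ^1 − λ‖² + ‖x^1 − x*‖_P² − ‖y^1 − y*‖_V² − β‖z^1 − z*‖_V²). -/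
open Matrix Finset Filter Topology

namespace StmtAux


lemma dot_self_nonneg {r : ℕ} (v : Fin r → ℝ) : 0 ≤ v ⬝ᵥ v :=
  Finset.sum_nonneg fun i _ => mul_self_nonneg _

lemma sum_dot {r : ℕ} {ι : Type*} (s : Finset ι) (f : ι → Fin r → ℝ) (w : Fin r → ℝ) :
    (∑ i ∈ s, f i) ⬝ᵥ w = ∑ i ∈ s, f i ⬝ᵥ w := by
  simp only [dotProduct, Finset.sum_apply, Finset.sum_mul]
  exact Finset.sum_comm

lemma dot_sum {r : ℕ} {ι : Type*} (s : Finset ι) (w : Fin r → ℝ) (f : ι → Fin r → ℝ) :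
    w ⬝ᵥ (∑ i ∈ s, f i) = ∑ i ∈ s, w ⬝ᵥ f i := by
  rw [dotProduct_comm, sum_dot]
  simp [dotProduct_comm]

lemma young {r : ℕ} (α : ℝ) (hα : 1 ≤ α) (a s : Fin r → ℝ) :
    a ⬝ᵥ s ≤ α / 2 * (a ⬝ᵥ a) + 1 / 2 * (s ⬝ᵥ s) := by
  have h := dot_self_nonneg (α • a - s)
  simp only [sub_dotProduct, dotProduct_sub, smul_dotProduct, dotProduct_smul, smul_eq_mul] at h
  have hc : a ⬝ᵥ s = s ⬝ᵥ a := dotProduct_comm a s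
  nlinarith [dot_self_nonneg s, dot_self_nonneg a, sq_nonneg (α - 1), hα,
    mul_nonneg (sub_nonneg.2 hα) (dot_self_nonneg s)]

/-- sum over Icc 1 t as range -/
lemma sum_Icc_one (t : ℕ) (f : ℕ → ℝ) :
    ∑ k ∈ Finset.Icc 1 t, f k = ∑ i ∈ Finset.range t, f (i + 1) := by
  induction t with
  | zero => simp
  | succ t ih =>
      rw [Finset.sum_Icc_succ_top (by omega : 1 ≤ t + 1), ih, Finset.sum_range_succ]

lemma telescope (t : ℕ) (F : ℕ → ℝ) :
    ∑ k ∈ Finset.Icc 1 t, (F k - F (k + 1)) = F 1 - F (t + 1) := by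
  rw [sum_Icc_one]
  have := Finset.sum_range_sub' (fun i => F (i + 1)) t
  simpa using this

/-- bilinear form associated to an m×m matrix acting on block vectors -/
noncomputable def BW {m r : ℕ} (U : Matrix (Fin m) (Fin m) ℝ) (a b : Fin m → Fin r → ℝ) : ℝ :=
  ∑ i, ∑ j, U i j * (a i ⬝ᵥ b j)

variable {m r : ℕ} {U : Matrix (Fin m) (Fin m) ℝ}

lemma BW_comm (hU : ∀ i j, U i j = U j i) (a b : Fin m → Fin r → ℝ) :
    BW U a b = BW U b a := by
  rw [BW, Finset.sum_comm, BW]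
  refine Finset.sum_congr rfl fun j _ => Finset.sum_congr rfl fun i _ => ?_
  rw [hU i j, dotProduct_comm]

lemma BW_sub_right (a b c : Fin m → Fin r → ℝ) :
    BW U a (fun i => b i - c i) = BW U a b - BW U a c := by
  simp [BW, dotProduct_sub, mul_sub, Finset.sum_sub_distrib]

lemma BW_sub_left (a b c : Fin m → Fin r → ℝ) :
    BW U (fun i => a i - b i) c = BW U a c - BW U b c := by
  simp [BW, sub_dotProduct, mul_sub, Finset.sum_sub_distrib]

/-- polarization identity for a symmetric bilinear form -/
lemma BW_polar (hU : ∀ i j, U i j = U j i) (a b : Fin m → Fin r → ℝ) :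
    BW U a (fun i => a i - b i)
      = 1 / 2 * (BW U a a - BW U b b + BW U (fun i => a i - b i) (fun i => a i - b i)) := by
  rw [BW_sub_right, BW_sub_left, BW_sub_right, BW_sub_right,
    BW_comm hU b a]
  ring

/-- rank-one part: `∑ᵢⱼ uⱼ ⟨aᵢ, bⱼ⟩ = ⟨∑ aᵢ, ∑ uⱼ • bⱼ⟩` -/
lemma sum_sum_u (u : Fin m → ℝ) (a b : Fin m → Fin r → ℝ) :
    ∑ i, ∑ j, u j * (a i ⬝ᵥ b j) = (∑ i, a i) ⬝ᵥ (∑ j, u j • b j) := by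
  rw [sum_dot]
  refine Finset.sum_congr rfl fun i _ => ?_
  rw [dot_sum]
  refine Finset.sum_congr rfl fun j _ => ?_
  rw [dotProduct_smul, smul_eq_mul]

lemma sum_sum_uu (u : Fin m → ℝ) (a b : Fin m → Fin r → ℝ) :
    ∑ i, ∑ j, (u i * u j) * (a i ⬝ᵥ b j) = (∑ i, u i • a i) ⬝ᵥ (∑ j, u j • b j) := by
  rw [sum_dot]
  refine Finset.sum_congr rfl fun i _ => ?_
  rw [dot_sum]
  refine Finset.sum_congr rfl fun j _ => ?_
  rw [smul_dotProduct, dotProduct_smul, smul_eq_mul, smul_eq_mul]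
  ring



/-- Subgradient-type inequality for one block obtained from the prox-minimization
property by moving towards `xs` and letting the step size go to 0. -/
lemma block_key {c : ℕ} (g : (Fin c → ℝ) → ℝ) (hg : ConvexOn ℝ Set.univ g)
    (P : Matrix (Fin c) (Fin c) ℝ) (hP : P.PosSemidef)
    (cvec a o xs : Fin c → ℝ)
    (hopt : ∀ ξ, cvec ⬝ᵥ a + g a + 1 / 2 * ((a - o) ⬝ᵥ (P *ᵥ (a - o)))
        ≤ cvec ⬝ᵥ ξ + g ξ + 1 / 2 * ((ξ - o) ⬝ᵥ (P *ᵥ (ξ - o)))) :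
    cvec ⬝ᵥ (a - xs) + g a - g xs ≤ (a - o) ⬝ᵥ (P *ᵥ (xs - a)) := by
  have hsymdot : ∀ w z : Fin c → ℝ, w ⬝ᵥ (P *ᵥ z) = z ⬝ᵥ (P *ᵥ w) := by
    intro w z
    have hPt : Pᵀ = P := hP.1
    rw [dotProduct_mulVec, ← Matrix.mulVec_transpose, hPt, dotProduct_comm]
  set v : Fin c → ℝ := xs - a with hvdef
  have main : ∀ τ : ℝ, 0 < τ → τ ≤ 1 →
      cvec ⬝ᵥ (a - xs) + g a - g xs
        ≤ (a - o) ⬝ᵥ (P *ᵥ v) + τ / 2 * (v ⬝ᵥ (P *ᵥ v)) := by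
    intro τ hτ hτ1
    have h := hopt (a + τ • v)
    have hξ : a + τ • v = (1 - τ) • a + τ • xs := by
      rw [hvdef, smul_sub, sub_smul, one_smul]; abel
    have hgξ : g (a + τ • v) ≤ (1 - τ) * g a + τ * g xs := by
      rw [hξ]
      exact hg.2 (Set.mem_univ _) (Set.mem_univ _) (by linarith) (le_of_lt hτ) (by ring)
    have e1 : cvec ⬝ᵥ (a + τ • v) = cvec ⬝ᵥ a + τ * (cvec ⬝ᵥ v) := by
      rw [dotProduct_add, dotProduct_smul, smul_eq_mul]
    have e2 : (a + τ • v - o) ⬝ᵥ (P *ᵥ (a + τ • v - o))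
        = (a - o) ⬝ᵥ (P *ᵥ (a - o)) + 2 * τ * ((a - o) ⬝ᵥ (P *ᵥ v))
          + τ ^ 2 * (v ⬝ᵥ (P *ᵥ v)) := by
      have hre : a + τ • v - o = (a - o) + τ • v := by abel
      rw [hre, mulVec_add, mulVec_smul]
      simp only [add_dotProduct, dotProduct_add, smul_dotProduct, dotProduct_smul, smul_eq_mul]
      rw [hsymdot v (a - o)]
      ring
    have hv : cvec ⬝ᵥ v = -(cvec ⬝ᵥ (a - xs)) := by
      rw [hvdef, ← dotProduct_neg, neg_sub]
    rw [e1, e2, hv] at h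
    have hlin : τ * (cvec ⬝ᵥ (a - xs) + g a - g xs)
        ≤ τ * ((a - o) ⬝ᵥ (P *ᵥ v) + τ / 2 * (v ⬝ᵥ (P *ᵥ v))) := by
      nlinarith [h, hgξ]
    exact le_of_mul_le_mul_left hlin hτ
  have hVnn : 0 ≤ v ⬝ᵥ (P *ᵥ v) := hP.dotProduct_mulVec_nonneg v
  have hgoal : (a - o) ⬝ᵥ (P *ᵥ (xs - a)) = (a - o) ⬝ᵥ (P *ᵥ v) := rfl
  rw [hgoal]
  refine le_of_forall_pos_le_add fun ε hε => ?_
  set V := v ⬝ᵥ (P *ᵥ v) with hV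
  have hτpos : 0 < min 1 (ε / (V + 1)) := lt_min one_pos (div_pos hε (by linarith))
  have h2 := main _ hτpos (min_le_left _ _)
  have h3 : min 1 (ε / (V + 1)) / 2 * V ≤ ε := by
    have hm : min 1 (ε / (V + 1)) ≤ ε / (V + 1) := min_le_right _ _
    have h5 : min 1 (ε / (V + 1)) * V ≤ ε / (V + 1) * V :=
      mul_le_mul_of_nonneg_right hm hVnn
    have h4 : ε / (V + 1) * V ≤ ε := by
      rw [div_mul_eq_mul_div, div_le_iff₀ (by linarith : (0:ℝ) < V + 1)]
      nlinarith
    linarith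
  linarith


end StmtAux

namespace StmtAux

/-- the Lyapunov functional Φ -/
noncomputable def Phi {m q p : ℕ} {n : Fin m → ℕ}
    (H : ∀ i : Fin m, Matrix (Fin q) (Fin (n i)) ℝ)
    (A : ∀ i : Fin m, Matrix (Fin p) (Fin (n i)) ℝ)
    (P : ∀ i : Fin m, Matrix (Fin (n i)) (Fin (n i)) ℝ)
    (W : Matrix (Fin m) (Fin m) ℝ) (u : Fin m → ℝ) (β : ℝ)
    (d : ∀ i : Fin m, Fin (n i) → ℝ) : ℝ :=
  1 / 2 * (normPSq P d
    - BW (fun i j => W i j - u j) (fun i => H i *ᵥ d i) (fun i => H i *ᵥ d i)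
    - β * BW (fun i j => W i j - u j) (fun i => A i *ᵥ d i) (fun i => A i *ᵥ d i))

lemma tdot {r c : ℕ} (M : Matrix (Fin r) (Fin c) ℝ) (w : Fin r → ℝ) (x : Fin c → ℝ) :
    (Mᵀ *ᵥ w) ⬝ᵥ x = w ⬝ᵥ (M *ᵥ x) := by
  rw [Matrix.mulVec_transpose, ← dotProduct_mulVec]

lemma step_bound {m q p : ℕ} {n : Fin m → ℕ}
    (H : ∀ i : Fin m, Matrix (Fin q) (Fin (n i)) ℝ)
    (A : ∀ i : Fin m, Matrix (Fin p) (Fin (n i)) ℝ)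
    (b : Fin p → ℝ)
    (g : ∀ i : Fin m, (Fin (n i) → ℝ) → ℝ)
    (hg : ∀ i : Fin m, ConvexOn ℝ Set.univ (g i))
    (P : ∀ i : Fin m, Matrix (Fin (n i)) (Fin (n i)) ℝ)
    (hP : ∀ i : Fin m, (P i).PosSemidef)
    (W : Matrix (Fin m) (Fin m) ℝ) (u : Fin m → ℝ)
    (hU : ∀ i j : Fin m, W i j - u j = W j i - u i)
    (β ρ α : ℝ) (hρ : 0 < ρ) (hβρ : ρ ≤ β) (hα : 1 ≤ α)
    (Mhat : Matrix (Fin m) (Fin m) ℝ)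
    (hM : Mhat = fun i j => W i j - u j + α * (u i * u j))
    (hPhat : ∀ v : ∀ i : Fin m, Fin (n i) → ℝ,
      0 ≤ normPSq P v - quadKron Mhat H v - β * quadKron Mhat A v)
    (xstar : ∀ i : Fin m, Fin (n i) → ℝ) (hfeas : blkMulVec A xstar = b)
    (o a : ∀ i : Fin m, Fin (n i) → ℝ) (lk lk1 : Fin p → ℝ)
    (hit : Iter H A b g P W β ρ o a lk lk1)
    (lamv : Fin p → ℝ) :
    Fobj H g a - Fobj H g xstar - lamv ⬝ᵥ (blkMulVec A a - b)
      ≤ 1 / (2 * ρ) * ((lk - lamv) ⬝ᵥ (lk - lamv) - (lk1 - lamv) ⬝ᵥ (lk1 - lamv))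
        + Phi H A P W u β (fun i => o i - xstar i)
        - Phi H A P W u β (fun i => a i - xstar i) := by
  obtain ⟨hopt, hlam⟩ := hit
  -- abbreviations
  set d : ∀ i : Fin m, Fin (n i) → ℝ := fun i => a i - xstar i with hd
  set d0 : ∀ i : Fin m, Fin (n i) → ℝ := fun i => o i - xstar i with hd0
  set Δ : ∀ i : Fin m, Fin (n i) → ℝ := fun i => a i - o i with hΔ
  set yd : Fin m → Fin q → ℝ := fun i => H i *ᵥ d i with hyd
  set yd0 : Fin m → Fin q → ℝ := fun i => H i *ᵥ d0 i with hyd0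
  set yΔ : Fin m → Fin q → ℝ := fun i => H i *ᵥ Δ i with hyΔ
  set zd : Fin m → Fin p → ℝ := fun i => A i *ᵥ d i with hzd
  set zd0 : Fin m → Fin p → ℝ := fun i => A i *ᵥ d0 i with hzd0
  set zΔ : Fin m → Fin p → ℝ := fun i => A i *ᵥ Δ i with hzΔ
  set s : Fin q → ℝ := ∑ i, yd i with hs
  set rr : Fin p → ℝ := ∑ i, zd i with hrr
  set U : Fin m → Fin m → ℝ := fun i j => W i j - u j with hUdef
  have hUsym : ∀ i j, U i j = U j i := fun i j => hU i j
  -- residual identity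
  have hres : blkMulVec A a - b = rr := by
    rw [← hfeas, hrr, blkMulVec, blkMulVec, ← Finset.sum_sub_distrib]
    exact Finset.sum_congr rfl fun i _ => (mulVec_sub _ _ _).symm
  have hsy : blkMulVec H a - blkMulVec H xstar = s := by
    rw [hs, blkMulVec, blkMulVec, ← Finset.sum_sub_distrib]
    exact Finset.sum_congr rfl fun i _ => (mulVec_sub _ _ _).symm
  -- per-block key inequality
  have key : ∀ i, (blkMulVec H (xhat W o a i)) ⬝ᵥ yd i
      - (lk - β • (blkMulVec A (xhat W o a i) - b)) ⬝ᵥ zd i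
      + g i (a i) - g i (xstar i)
      ≤ Δ i ⬝ᵥ (P i *ᵥ (xstar i - a i)) := by
    intro i
    have h := block_key (g i) (hg i) (P i) (hP i)
        ((H i)ᵀ *ᵥ blkMulVec H (xhat W o a i)
          - (A i)ᵀ *ᵥ (lk - β • (blkMulVec A (xhat W o a i) - b)))
        (a i) (o i) (xstar i) (fun ξ => hopt i ξ)
    rw [sub_dotProduct, tdot, tdot] at h
    exact h
  -- expansion of the hat points
  have hxhatH : ∀ i, blkMulVec H (xhat W o a i)
      = blkMulVec H a - ∑ j, W i j • yΔ j := by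
    intro i
    rw [blkMulVec, blkMulVec, ← Finset.sum_sub_distrib]
    refine Finset.sum_congr rfl fun j _ => ?_
    show H j *ᵥ (xhat W o a i j) = _
    rw [xhat]
    rw [mulVec_sub, mulVec_smul]
  have hxhatA : ∀ i, blkMulVec A (xhat W o a i) - b
      = rr - ∑ j, W i j • zΔ j := by
    intro i
    rw [← hres]
    have : blkMulVec A (xhat W o a i) = blkMulVec A a - ∑ j, W i j • zΔ j := by
      rw [blkMulVec, blkMulVec, ← Finset.sum_sub_distrib]
      refine Finset.sum_congr rfl fun j _ => ?_
      show A j *ᵥ (xhat W o a i j) = _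
      rw [xhat, mulVec_sub, mulVec_smul]
    rw [this]
    abel
  -- per-block expansion of the linear term
  have hCi : ∀ i, (blkMulVec H (xhat W o a i)) ⬝ᵥ yd i
      - (lk - β • (blkMulVec A (xhat W o a i) - b)) ⬝ᵥ zd i
      = (blkMulVec H a) ⬝ᵥ yd i - ∑ j, W i j * (yΔ j ⬝ᵥ yd i)
        - lk ⬝ᵥ zd i + β * (rr ⬝ᵥ zd i) - β * ∑ j, W i j * (zΔ j ⬝ᵥ zd i) := by
    intro i
    rw [hxhatH i, hxhatA i]
    simp only [sub_dotProduct, dotProduct_sub, smul_dotProduct, smul_eq_mul, sum_dot]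
    ring
  -- named scalar quantities
  set SY : ℝ := ∑ i, ∑ j, W i j * (yΔ j ⬝ᵥ yd i) with hSY
  set SZ : ℝ := ∑ i, ∑ j, W i j * (zΔ j ⬝ᵥ zd i) with hSZ
  set GA : ℝ := ∑ i, g i (a i) with hGA
  set GS : ℝ := ∑ i, g i (xstar i) with hGS
  set PX : ℝ := ∑ i, Δ i ⬝ᵥ (P i *ᵥ (xstar i - a i)) with hPX
  set uy : Fin q → ℝ := ∑ j, u j • yΔ j with huy
  set uz : Fin p → ℝ := ∑ j, u j • zΔ j with huz
  -- summed key inequality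
  have skey : (blkMulVec H a) ⬝ᵥ s - SY - lk ⬝ᵥ rr + β * (rr ⬝ᵥ rr) - β * SZ
      + GA - GS ≤ PX := by
    have h1 : ∑ i, ((blkMulVec H a) ⬝ᵥ yd i - ∑ j, W i j * (yΔ j ⬝ᵥ yd i)
        - lk ⬝ᵥ zd i + β * (rr ⬝ᵥ zd i) - β * ∑ j, W i j * (zΔ j ⬝ᵥ zd i)
        + g i (a i) - g i (xstar i))
        ≤ ∑ i, Δ i ⬝ᵥ (P i *ᵥ (xstar i - a i)) := by
      refine Finset.sum_le_sum fun i _ => ?_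
      have hk := key i
      rw [hCi i] at hk
      linarith
    have h2 : ∑ i, ((blkMulVec H a) ⬝ᵥ yd i - ∑ j, W i j * (yΔ j ⬝ᵥ yd i)
        - lk ⬝ᵥ zd i + β * (rr ⬝ᵥ zd i) - β * ∑ j, W i j * (zΔ j ⬝ᵥ zd i)
        + g i (a i) - g i (xstar i))
        = (blkMulVec H a) ⬝ᵥ s - SY - lk ⬝ᵥ rr + β * (rr ⬝ᵥ rr) - β * SZ + GA - GS := by
      simp only [Finset.sum_sub_distrib, Finset.sum_add_distrib, ← Finset.mul_sum,
        ← dot_sum, hSY, hSZ, hGA, hGS, hs, hrr]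
    rw [h2] at h1
    exact h1
  -- objective difference
  have hF : Fobj H g a - Fobj H g xstar
      = (blkMulVec H a) ⬝ᵥ s - 1 / 2 * (s ⬝ᵥ s) + (GA - GS) := by
    rw [Fobj, Fobj]
    have h1 : blkMulVec H xstar = blkMulVec H a - s := by rw [← hsy]; abel
    rw [h1]
    simp only [dotProduct_sub, sub_dotProduct]
    rw [dotProduct_comm s (blkMulVec H a)]
    rw [hGA, hGS]
    ring
  -- first main bound
  have f1 : Fobj H g a - Fobj H g xstar - lamv ⬝ᵥ (blkMulVec A a - b)
      ≤ (lk - lamv) ⬝ᵥ rr - β * (rr ⬝ᵥ rr) - 1 / 2 * (s ⬝ᵥ s) + SY + β * SZ + PX := by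
    rw [hres, hF, sub_dotProduct]
    linarith
  -- decomposition of SY and SZ
  have hWU : ∀ i j : Fin m, W i j = U i j + u j := fun i j => by rw [hUdef]; ring
  have eSY : SY = BW U yd yΔ + s ⬝ᵥ uy := by
    rw [hSY]; unfold BW; rw [huy, hs, ← sum_sum_u]
    rw [← Finset.sum_add_distrib]
    refine Finset.sum_congr rfl fun i _ => ?_
    rw [← Finset.sum_add_distrib]
    refine Finset.sum_congr rfl fun j _ => ?_
    rw [hWU i j, dotProduct_comm (yΔ j) (yd i)]
    ring
  have eSZ : SZ = BW U zd zΔ + rr ⬝ᵥ uz := by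
    rw [hSZ]; unfold BW; rw [huz, hrr, ← sum_sum_u]
    rw [← Finset.sum_add_distrib]
    refine Finset.sum_congr rfl fun i _ => ?_
    rw [← Finset.sum_add_distrib]
    refine Finset.sum_congr rfl fun j _ => ?_
    rw [hWU i j, dotProduct_comm (zΔ j) (zd i)]
    ring
  -- Δ blocks as differences
  have hΔd : ∀ i, Δ i = d i - d0 i := fun i => by
    simp only [hΔ, hd, hd0]; abel
  have hyΔ' : yΔ = fun i => yd i - yd0 i := funext fun i => by
    simp only [hyΔ, hyd, hyd0, hΔd i, mulVec_sub]
  have hzΔ' : zΔ = fun i => zd i - zd0 i := funext fun i => by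
    simp only [hzΔ, hzd, hzd0, hΔd i, mulVec_sub]
  -- polarization
  have polarY : BW U yd yΔ
      = 1 / 2 * (BW U yd yd - BW U yd0 yd0 + BW U yΔ yΔ) := by
    rw [hyΔ']
    exact BW_polar hUsym yd yd0
  have polarZ : BW U zd zΔ
      = 1 / 2 * (BW U zd zd - BW U zd0 zd0 + BW U zΔ zΔ) := by
    rw [hzΔ']
    exact BW_polar hUsym zd zd0
  -- quadKron expansion at Δ
  have hyΔi : ∀ i, H i *ᵥ Δ i = yΔ i := fun i => by rw [hyΔ]
  have hzΔi : ∀ i, A i *ᵥ Δ i = zΔ i := fun i => by rw [hzΔ]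
  have eQKH : quadKron Mhat H Δ = BW U yΔ yΔ + α * (uy ⬝ᵥ uy) := by
    rw [quadKron]; unfold BW; rw [huy, ← sum_sum_uu]
    simp only [hM, hUdef, hyΔi]
    rw [Finset.mul_sum, ← Finset.sum_add_distrib]
    refine Finset.sum_congr rfl fun i _ => ?_
    rw [Finset.mul_sum, ← Finset.sum_add_distrib]
    refine Finset.sum_congr rfl fun j _ => ?_
    ring
  have eQKA : quadKron Mhat A Δ = BW U zΔ zΔ + α * (uz ⬝ᵥ uz) := by
    rw [quadKron]; unfold BW; rw [huz, ← sum_sum_uu]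
    simp only [hM, hUdef, hzΔi]
    rw [Finset.mul_sum, ← Finset.sum_add_distrib]
    refine Finset.sum_congr rfl fun i _ => ?_
    rw [Finset.mul_sum, ← Finset.sum_add_distrib]
    refine Finset.sum_congr rfl fun j _ => ?_
    ring
  have hG : 0 ≤ normPSq P Δ - (BW U yΔ yΔ + α * (uy ⬝ᵥ uy))
      - β * (BW U zΔ zΔ + α * (uz ⬝ᵥ uz)) := by
    have := hPhat Δ
    rw [eQKH, eQKA] at this
    exact this
  -- prox-term identity
  have symdot : ∀ (i : Fin m) (w z : Fin (n i) → ℝ),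
      w ⬝ᵥ (P i *ᵥ z) = z ⬝ᵥ (P i *ᵥ w) := by
    intro i w z
    have hPt : (P i)ᵀ = P i := (hP i).1
    rw [dotProduct_mulVec, ← Matrix.mulVec_transpose, hPt, dotProduct_comm]
  have ePX : PX = 1 / 2 * (normPSq P d0 - normPSq P d - normPSq P Δ) := by
    rw [hPX, normPSq, normPSq, normPSq]
    rw [show (1:ℝ)/2 * (∑ i, d0 i ⬝ᵥ (P i *ᵥ d0 i) - ∑ i, d i ⬝ᵥ (P i *ᵥ d i)
        - ∑ i, Δ i ⬝ᵥ (P i *ᵥ Δ i))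
      = ∑ i, (1/2 * (d0 i ⬝ᵥ (P i *ᵥ d0 i) - d i ⬝ᵥ (P i *ᵥ d i)
        - Δ i ⬝ᵥ (P i *ᵥ Δ i))) by
        rw [← Finset.sum_sub_distrib, ← Finset.sum_sub_distrib, Finset.mul_sum]]
    refine Finset.sum_congr rfl fun i _ => ?_
    have h1 : xstar i - a i = -(d i) := by rw [hd]; simp
    have h2 : Δ i = d i - d0 i := hΔd i
    rw [h1, h2]
    simp only [mulVec_neg, dotProduct_neg, mulVec_sub, sub_dotProduct, dotProduct_sub]
    rw [symdot i (d0 i) (d i)]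
    ring
  -- lambda identity
  have hlam1 : lk1 - lamv = (lk - lamv) - ρ • rr := by
    rw [hlam, hres]; abel
  have expand : (lk1 - lamv) ⬝ᵥ (lk1 - lamv)
      = (lk - lamv) ⬝ᵥ (lk - lamv) - 2 * ρ * ((lk - lamv) ⬝ᵥ rr)
        + ρ ^ 2 * (rr ⬝ᵥ rr) := by
    rw [hlam1]
    set L := lk - lamv with hL
    simp only [sub_dotProduct, dotProduct_sub, smul_dotProduct, dotProduct_smul, smul_eq_mul]
    rw [dotProduct_comm rr L]
    ring
  have hρ' : ρ ≠ 0 := ne_of_gt hρ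
  have eL : (lk - lamv) ⬝ᵥ rr
      = 1 / (2 * ρ) * ((lk - lamv) ⬝ᵥ (lk - lamv) - (lk1 - lamv) ⬝ᵥ (lk1 - lamv))
        + ρ / 2 * (rr ⬝ᵥ rr) := by
    rw [expand]
    field_simp
    ring
  -- Young inequalities
  have hβ : (0:ℝ) ≤ β := le_trans hρ.le hβρ
  have hYy : s ⬝ᵥ uy ≤ α / 2 * (uy ⬝ᵥ uy) + 1 / 2 * (s ⬝ᵥ s) := by
    rw [dotProduct_comm]
    exact young α hα uy s
  have hYzβ : β * (rr ⬝ᵥ uz) ≤ β * (α / 2 * (uz ⬝ᵥ uz) + 1 / 2 * (rr ⬝ᵥ rr)) := by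
    refine mul_le_mul_of_nonneg_left ?_ hβ
    rw [dotProduct_comm]
    exact young α hα uz rr
  have hRβρ : 0 ≤ (β - ρ) * (rr ⬝ᵥ rr) :=
    mul_nonneg (by linarith) (dot_self_nonneg rr)
  -- β-scaled equalities
  have eSZβ : β * SZ = β * BW U zd zΔ + β * (rr ⬝ᵥ uz) := by rw [eSZ]; ring
  have polarZβ : β * BW U zd zΔ
      = β / 2 * BW U zd zd - β / 2 * BW U zd0 zd0 + β / 2 * BW U zΔ zΔ := by
    rw [polarZ]; ring
  -- Phi unfolding
  have ePhi0 : Phi H A P W u β d0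
      = 1 / 2 * (normPSq P d0 - BW U yd0 yd0 - β * BW U zd0 zd0) := by
    rw [Phi, hUdef, hyd0, hzd0]
  have ePhi1 : Phi H A P W u β d
      = 1 / 2 * (normPSq P d - BW U yd yd - β * BW U zd zd) := by
    rw [Phi, hUdef, hyd, hzd]
  rw [hres, ePhi0, ePhi1]
  rw [hres] at f1
  clear_value d d0 Δ yd yd0 yΔ zd zd0 zΔ s rr U SY SZ GA GS PX uy uz
  linarith [f1, eSY, polarY, eSZβ, polarZβ, ePX, eL, hYy, hYzβ, hRβρ, hG]

end StmtAux

namespace StmtAux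

lemma mulVec_sumF {r c : ℕ} {ι : Type*} (s : Finset ι) (M : Matrix (Fin r) (Fin c) ℝ)
    (f : ι → Fin c → ℝ) : M *ᵥ (∑ k ∈ s, f k) = ∑ k ∈ s, M *ᵥ f k := by
  ext i
  simp only [Matrix.mulVec, dotProduct, Finset.sum_apply, Finset.mul_sum]
  exact Finset.sum_comm

lemma sq_sum_le {r : ℕ} {ι : Type*} (s : Finset ι) (v : ι → Fin r → ℝ) :
    (∑ k ∈ s, v k) ⬝ᵥ (∑ k ∈ s, v k) ≤ (s.card : ℝ) * ∑ k ∈ s, v k ⬝ᵥ v k := by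
  rw [sum_dot]
  have h1 : ∀ k ∈ s, v k ⬝ᵥ (∑ l ∈ s, v l) ≤ ∑ l ∈ s, (1/2 * (v k ⬝ᵥ v k) + 1/2 * (v l ⬝ᵥ v l)) := by
    intro k _
    rw [dot_sum]
    refine Finset.sum_le_sum fun l _ => ?_
    have := young 1 le_rfl (v k) (v l)
    simpa using this
  calc ∑ k ∈ s, v k ⬝ᵥ (∑ l ∈ s, v l)
      ≤ ∑ k ∈ s, ∑ l ∈ s, (1/2 * (v k ⬝ᵥ v k) + 1/2 * (v l ⬝ᵥ v l)) :=
        Finset.sum_le_sum h1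
    _ = (s.card : ℝ) * ∑ k ∈ s, v k ⬝ᵥ v k := by
        simp only [Finset.sum_add_distrib, Finset.sum_const, nsmul_eq_mul, ← Finset.mul_sum]
        ring

lemma quadKron_expand {m r : ℕ} {n : Fin m → ℕ}
    (W : Matrix (Fin m) (Fin m) ℝ) (u : Fin m → ℝ) (α : ℝ)
    (Mhat : Matrix (Fin m) (Fin m) ℝ)
    (hM : Mhat = fun i j => W i j - u j + α * (u i * u j))
    (B : ∀ i : Fin m, Matrix (Fin r) (Fin (n i)) ℝ)
    (v : ∀ i : Fin m, Fin (n i) → ℝ) :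
    quadKron Mhat B v
      = BW (fun i j => W i j - u j) (fun i => B i *ᵥ v i) (fun i => B i *ᵥ v i)
        + α * ((∑ j, u j • (B j *ᵥ v j)) ⬝ᵥ (∑ j, u j • (B j *ᵥ v j))) := by
  rw [quadKron]; unfold BW; rw [← sum_sum_uu]
  simp only [hM]
  rw [Finset.mul_sum, ← Finset.sum_add_distrib]
  refine Finset.sum_congr rfl fun i _ => ?_
  rw [Finset.mul_sum, ← Finset.sum_add_distrib]
  refine Finset.sum_congr rfl fun j _ => ?_
  ring

lemma Phi_nonneg {m q p : ℕ} {n : Fin m → ℕ}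
    (H : ∀ i : Fin m, Matrix (Fin q) (Fin (n i)) ℝ)
    (A : ∀ i : Fin m, Matrix (Fin p) (Fin (n i)) ℝ)
    (P : ∀ i : Fin m, Matrix (Fin (n i)) (Fin (n i)) ℝ)
    (W : Matrix (Fin m) (Fin m) ℝ) (u : Fin m → ℝ) (β α : ℝ)
    (hβ : 0 ≤ β) (hα : 0 ≤ α)
    (Mhat : Matrix (Fin m) (Fin m) ℝ)
    (hM : Mhat = fun i j => W i j - u j + α * (u i * u j))
    (hPhat : ∀ v : ∀ i : Fin m, Fin (n i) → ℝ,
      0 ≤ normPSq P v - quadKron Mhat H v - β * quadKron Mhat A v)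
    (d : ∀ i : Fin m, Fin (n i) → ℝ) :
    0 ≤ Phi H A P W u β d := by
  have h := hPhat d
  rw [quadKron_expand W u α Mhat hM H d, quadKron_expand W u α Mhat hM A d] at h
  rw [Phi]
  have h1 : 0 ≤ α * ((∑ j, u j • (H j *ᵥ d j)) ⬝ᵥ (∑ j, u j • (H j *ᵥ d j))) :=
    mul_nonneg hα (dot_self_nonneg _)
  have h2 : 0 ≤ β * (α * ((∑ j, u j • (A j *ᵥ d j)) ⬝ᵥ (∑ j, u j • (A j *ᵥ d j)))) :=
    mul_nonneg hβ (mul_nonneg hα (dot_self_nonneg _))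
  nlinarith [h, h1, h2]

end StmtAux

open StmtAux

/-- Ergodic gap bound (inequality (22)): under the hypotheses of the telescoped
one-iteration bound, with `P̂ ⪰ 0` and feasible `x*`, for `x̄^{t+1} := (1/t)Σ_{k=1}^t x^{k+1}`
and every `λ`:
`F(x̄^{t+1}) − F(x*) − ⟨λ, Ax̄^{t+1} − b⟩
  ≤ (1/(2t))((1/ρ)‖λ¹ − λ‖² + ‖x¹ − x*‖_P² − ‖y¹ − y*‖_V² − β‖z¹ − z*‖_V²)`. -/
theorem stmt_10 {m q p : ℕ} {n : Fin m → ℕ}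
    (H : ∀ i : Fin m, Matrix (Fin q) (Fin (n i)) ℝ)
    (A : ∀ i : Fin m, Matrix (Fin p) (Fin (n i)) ℝ)
    (b : Fin p → ℝ)
    (g : ∀ i : Fin m, (Fin (n i) → ℝ) → ℝ)
    (hg : ∀ i : Fin m, ConvexOn ℝ Set.univ (g i))
    (P : ∀ i : Fin m, Matrix (Fin (n i)) (Fin (n i)) ℝ)
    (hP : ∀ i : Fin m, (P i).PosSemidef)
    (W : Matrix (Fin m) (Fin m) ℝ) (u : Fin m → ℝ)
    (hW : ∀ i j : Fin m, i ≤ j → W i j = 1)              -- w_{ij} = 1 for j ≥ i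
    (hU : ∀ i j : Fin m, W i j - u j = W j i - u i)       -- U := W − euᵀ symmetric
    (β ρ α : ℝ) (hρ : 0 < ρ) (hβρ : ρ ≤ β) (hα : 1 ≤ α)
    (x : ℕ → ∀ i : Fin m, Fin (n i) → ℝ) (lam : ℕ → Fin p → ℝ)
    (hiter : ∀ k : ℕ, 1 ≤ k →
      Iter H A b g P W β ρ (x k) (x (k + 1)) (lam k) (lam (k + 1)))
    (Mhat : Matrix (Fin m) (Fin m) ℝ)
    (hM : Mhat = fun i j => W i j - u j + α * (u i * u j))
    -- P̂ := P − D_Hᵀ(M ⊗ I)D_H − β D_Aᵀ(M ⊗ I)D_A is positive semidefinite: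
    (hPhat : ∀ v : ∀ i : Fin m, Fin (n i) → ℝ,
      0 ≤ normPSq P v - quadKron Mhat H v - β * quadKron Mhat A v)
    (xstar : ∀ i : Fin m, Fin (n i) → ℝ) (hfeas : blkMulVec A xstar = b)
    (t : ℕ) (ht : 1 ≤ t)
    (xbar : ∀ i : Fin m, Fin (n i) → ℝ)
    (hxbar : xbar = fun i => (1 / (t : ℝ)) • ∑ k ∈ Finset.Icc 1 t, x (k + 1) i) :
    ∀ lamv : Fin p → ℝ,
      Fobj H g xbar - Fobj H g xstar - lamv ⬝ᵥ (blkMulVec A xbar - b)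
        ≤ (1 / (2 * t)) *
            ((1 / ρ) * ((lam 1 - lamv) ⬝ᵥ (lam 1 - lamv))
              + normPSq P (x 1 - xstar)
              - normVSq W u ((fun i => H i *ᵥ (x 1) i) - fun i => H i *ᵥ xstar i)
              - β * normVSq W u
                  ((fun i => A i *ᵥ (x 1) i) - fun i => A i *ᵥ xstar i)) := by
  intro lamv
  have htR : (0:ℝ) < (t:ℝ) := by exact_mod_cast Nat.pos_of_ne_zero (by omega)
  have htne : (t:ℝ) ≠ 0 := ne_of_gt htR
  have hβ : (0:ℝ) ≤ β := le_trans hρ.le hβρ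
  set K := Finset.Icc 1 t with hK
  have hcard : (K.card : ℝ) = (t : ℝ) := by rw [hK, Nat.card_Icc]; simp
  -- Lyapunov
  set Ψ : ℕ → ℝ := fun k =>
    1 / (2 * ρ) * ((lam k - lamv) ⬝ᵥ (lam k - lamv))
      + Phi H A P W u β (fun i => x k i - xstar i) with hΨ
  have hstep : ∀ k ∈ K, Fobj H g (x (k + 1)) - Fobj H g xstar
      - lamv ⬝ᵥ (blkMulVec A (x (k + 1)) - b) ≤ Ψ k - Ψ (k + 1) := by
    intro k hk
    have hk1 : 1 ≤ k := (Finset.mem_Icc.1 hk).1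
    have h := step_bound H A b g hg P hP W u hU β ρ α hρ hβρ hα Mhat hM hPhat
      xstar hfeas (x k) (x (k + 1)) (lam k) (lam (k + 1)) (hiter k hk1) lamv
    calc Fobj H g (x (k + 1)) - Fobj H g xstar - lamv ⬝ᵥ (blkMulVec A (x (k + 1)) - b)
        ≤ 1 / (2 * ρ) * ((lam k - lamv) ⬝ᵥ (lam k - lamv)
            - (lam (k + 1) - lamv) ⬝ᵥ (lam (k + 1) - lamv))
          + Phi H A P W u β (fun i => x k i - xstar i)
          - Phi H A P W u β (fun i => x (k + 1) i - xstar i) := h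
      _ = Ψ k - Ψ (k + 1) := by rw [hΨ]; ring
  have hsum : ∑ k ∈ K, (Fobj H g (x (k + 1)) - Fobj H g xstar
      - lamv ⬝ᵥ (blkMulVec A (x (k + 1)) - b)) ≤ Ψ 1 - Ψ (t + 1) := by
    calc ∑ k ∈ K, (Fobj H g (x (k + 1)) - Fobj H g xstar
        - lamv ⬝ᵥ (blkMulVec A (x (k + 1)) - b))
        ≤ ∑ k ∈ K, (Ψ k - Ψ (k + 1)) := Finset.sum_le_sum hstep
      _ = Ψ 1 - Ψ (t + 1) := telescope t Ψ
  have hΨt : 0 ≤ Ψ (t + 1) := by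
    rw [hΨ]
    have h1 : 0 ≤ 1 / (2 * ρ) * ((lam (t+1) - lamv) ⬝ᵥ (lam (t+1) - lamv)) :=
      mul_nonneg (by positivity) (dot_self_nonneg _)
    have h2 := Phi_nonneg H A P W u β α hβ (by linarith) Mhat hM hPhat
      (fun i => x (t+1) i - xstar i)
    linarith
  -- Jensen part
  have hbk : ∀ {r' : ℕ} (M : ∀ i : Fin m, Matrix (Fin r') (Fin (n i)) ℝ),
      blkMulVec M xbar = (1 / (t:ℝ)) • ∑ k ∈ K, blkMulVec M (x (k + 1)) := by
    intro r' M
    rw [hxbar, blkMulVec]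
    have h1 : ∀ i : Fin m, M i *ᵥ ((1 / (t:ℝ)) • ∑ k ∈ K, x (k+1) i)
        = (1 / (t:ℝ)) • ∑ k ∈ K, M i *ᵥ x (k+1) i := by
      intro i
      rw [mulVec_smul, mulVec_sumF]
    rw [Finset.sum_congr rfl fun i _ => h1 i, ← Finset.smul_sum, Finset.sum_comm]
    rfl
  have hq : (blkMulVec H xbar) ⬝ᵥ (blkMulVec H xbar)
      ≤ (1 / (t:ℝ)) * ∑ k ∈ K, (blkMulVec H (x (k + 1)) ⬝ᵥ blkMulVec H (x (k + 1))) := by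
    rw [hbk H]
    rw [smul_dotProduct, dotProduct_smul, smul_eq_mul, smul_eq_mul]
    have h2 := sq_sum_le K (fun k => blkMulVec H (x (k + 1)))
    rw [hcard] at h2
    have h3 : (0:ℝ) ≤ 1 / (t:ℝ) * (1 / (t:ℝ)) := by positivity
    calc 1 / (t:ℝ) * (1 / (t:ℝ) * ((∑ k ∈ K, blkMulVec H (x (k+1))) ⬝ᵥ
          (∑ k ∈ K, blkMulVec H (x (k+1)))))
        ≤ 1 / (t:ℝ) * (1 / (t:ℝ) * ((t:ℝ) * ∑ k ∈ K,
            blkMulVec H (x (k+1)) ⬝ᵥ blkMulVec H (x (k+1)))) := by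
          have := mul_le_mul_of_nonneg_left h2 (by positivity : (0:ℝ) ≤ 1 / (t:ℝ))
          exact mul_le_mul_of_nonneg_left this (by positivity)
      _ = (1 / (t:ℝ)) * ∑ k ∈ K, blkMulVec H (x (k+1)) ⬝ᵥ blkMulVec H (x (k+1)) := by
          field_simp
  have hgj : ∀ i : Fin m, g i (xbar i) ≤ (1 / (t:ℝ)) * ∑ k ∈ K, g i (x (k + 1) i) := by
    intro i
    have hxb : xbar i = ∑ k ∈ K, (1 / (t:ℝ)) • x (k + 1) i := by
      simp only [hxbar]
      rw [Finset.smul_sum]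
    have hw : ∑ _k ∈ K, (1 / (t:ℝ)) = 1 := by
      rw [Finset.sum_const, nsmul_eq_mul, hcard]
      field_simp
    have h := (hg i).map_sum_le (t := K) (w := fun _ => 1 / (t:ℝ))
      (p := fun k => x (k + 1) i) (fun _ _ => by positivity) hw
      (fun _ _ => Set.mem_univ _)
    rw [← hxb] at h
    calc g i (xbar i) ≤ ∑ k ∈ K, (1 / (t:ℝ)) • g i (x (k + 1) i) := h
      _ = (1 / (t:ℝ)) * ∑ k ∈ K, g i (x (k + 1) i) := by
          simp only [smul_eq_mul, Finset.mul_sum]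
  have hFbar : Fobj H g xbar ≤ (1 / (t:ℝ)) * ∑ k ∈ K, Fobj H g (x (k + 1)) := by
    rw [Fobj]
    have h2 : ∑ i, g i (xbar i) ≤ (1 / (t:ℝ)) * ∑ k ∈ K, ∑ i, g i (x (k + 1) i) := by
      calc ∑ i, g i (xbar i) ≤ ∑ i, (1 / (t:ℝ)) * ∑ k ∈ K, g i (x (k + 1) i) :=
            Finset.sum_le_sum fun i _ => hgj i
        _ = (1 / (t:ℝ)) * ∑ k ∈ K, ∑ i, g i (x (k + 1) i) := by
            rw [← Finset.mul_sum, Finset.sum_comm]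
    have h3 : (1 / (t:ℝ)) * ∑ k ∈ K, Fobj H g (x (k + 1))
        = (1:ℝ)/2 * ((1 / (t:ℝ)) * ∑ k ∈ K, (blkMulVec H (x (k + 1)) ⬝ᵥ blkMulVec H (x (k + 1))))
          + (1 / (t:ℝ)) * ∑ k ∈ K, ∑ i, g i (x (k + 1) i) := by
      simp only [Fobj]
      rw [Finset.sum_add_distrib, ← Finset.mul_sum]
      ring
    rw [h3]
    have h4 := mul_le_mul_of_nonneg_left hq (by norm_num : (0:ℝ) ≤ 1/2)
    linarith
  have hlin : lamv ⬝ᵥ (blkMulVec A xbar - b)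
      = (1 / (t:ℝ)) * ∑ k ∈ K, lamv ⬝ᵥ (blkMulVec A (x (k + 1)) - b) := by
    rw [hbk A]
    simp only [dotProduct_sub, dotProduct_smul, smul_eq_mul, dot_sum]
    rw [Finset.sum_sub_distrib, Finset.sum_const, nsmul_eq_mul, hcard]
    field_simp
  have hgap : Fobj H g xbar - Fobj H g xstar - lamv ⬝ᵥ (blkMulVec A xbar - b)
      ≤ (1 / (t:ℝ)) * (Ψ 1 - Ψ (t + 1)) := by
    have hsplit : (1 / (t:ℝ)) * ∑ k ∈ K, (Fobj H g (x (k + 1)) - Fobj H g xstar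
        - lamv ⬝ᵥ (blkMulVec A (x (k + 1)) - b))
        = (1 / (t:ℝ)) * ∑ k ∈ K, Fobj H g (x (k + 1))
          - Fobj H g xstar
          - (1 / (t:ℝ)) * ∑ k ∈ K, lamv ⬝ᵥ (blkMulVec A (x (k + 1)) - b) := by
      rw [Finset.sum_sub_distrib, Finset.sum_sub_distrib, Finset.sum_const, nsmul_eq_mul, hcard]
      field_simp
    have h5 := mul_le_mul_of_nonneg_left hsum (by positivity : (0:ℝ) ≤ 1 / (t:ℝ))
    rw [hsplit] at h5
    linarith [hFbar, h5, hlin.ge, hlin.le]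
  -- final assembly
  have hfin : (1 / (t:ℝ)) * (Ψ 1 - Ψ (t + 1)) ≤ (1 / (t:ℝ)) * Ψ 1 := by
    have := mul_le_mul_of_nonneg_left (sub_le_self (Ψ 1) hΨt) (by positivity : (0:ℝ) ≤ 1 / (t:ℝ))
    exact this
  have hyv : ((fun i => H i *ᵥ (x 1) i) - fun i => H i *ᵥ xstar i)
      = (fun i => H i *ᵥ (x 1 i - xstar i)) := by
    funext i
    simp [mulVec_sub]
  have hzv : ((fun i => A i *ᵥ (x 1) i) - fun i => A i *ᵥ xstar i)
      = (fun i => A i *ᵥ (x 1 i - xstar i)) := by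
    funext i
    simp [mulVec_sub]
  have hxv : x 1 - xstar = fun i => x 1 i - xstar i := rfl
  have hΨ1 : (1 / (t:ℝ)) * Ψ 1 = (1 / (2 * t)) *
      ((1 / ρ) * ((lam 1 - lamv) ⬝ᵥ (lam 1 - lamv))
        + normPSq P (x 1 - xstar)
        - normVSq W u ((fun i => H i *ᵥ (x 1) i) - fun i => H i *ᵥ xstar i)
        - β * normVSq W u ((fun i => A i *ᵥ (x 1) i) - fun i => A i *ᵥ xstar i)) := by
    have hρ' : ρ ≠ 0 := ne_of_gt hρ
    simp only [hΨ]
    rw [hyv, hzv, hxv, Phi]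
    rw [show normVSq W u (fun i => H i *ᵥ (x 1 i - xstar i))
        = BW (fun i j => W i j - u j) (fun i => H i *ᵥ (x 1 i - xstar i))
            (fun i => H i *ᵥ (x 1 i - xstar i)) from rfl]
    rw [show normVSq W u (fun i => A i *ᵥ (x 1 i - xstar i))
        = BW (fun i j => W i j - u j) (fun i => A i *ᵥ (x 1 i - xstar i))
            (fun i => A i *ᵥ (x 1 i - xstar i)) from rfl]
    field_simp
    ring
  rw [← hΨ1]
  linarith [hgap, hfin]
end
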